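/- arXiv:1102.5414 — 5 statements merged into one kernel-verified Lean document; each statement's English description precedes it below -/
import Mathlib

section
/- Let R be a commutative ring and let A, B be two comaximal ideals of R, i.e. A + B = R. Then for n ≥ 3, the mixed commutator subgroup [E(n,R,A), E(n,R,B)] of relative elementary subgroups of GL(n,R) equals E(n,R,AB). -/
open Matrix

/-- The elementary transvection `t_{ij}(c) = 1 + c e_{ij}` as an element of `GL(n,R)`. -/
def transvectionGL (R : Type*) [CommRing R] (N : ℕ) (i j : Fin N) (hij : i ≠ j) (c : R) :
    GL (Fin N) R :=
  ⟨Matrix.transvection i j c, Matrix.transvection i j (-c),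
    by rw [Matrix.transvection_mul_transvection_same i j hij, add_neg_cancel,
      Matrix.transvection_zero],
    by rw [Matrix.transvection_mul_transvection_same i j hij, neg_add_cancel,
      Matrix.transvection_zero]⟩

/-- `E(n,I)`: the subgroup of `GL(n,R)` generated by the elementary transvections
`t_{ij}(c)` with `c ∈ I`, `i ≠ j`. -/
def elementarySubgroup (R : Type*) [CommRing R] (N : ℕ) (I : Ideal R) :
    Subgroup (GL (Fin N) R) :=
  Subgroup.closure
    { g | ∃ (i j : Fin N) (hij : i ≠ j) (c : R), c ∈ I ∧ g = transvectionGL R N i j hij c }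

/-- `E(n,R,I)`: the relative elementary subgroup of level `I`, the normal closure of
`E(n,I)` in the (absolute) elementary group `E(n,R) = E(n, (⊤ : Ideal R))`. -/
def relativeElementarySubgroup (R : Type*) [CommRing R] (N : ℕ) (I : Ideal R) :
    Subgroup (GL (Fin N) R) :=
  Subgroup.closure
    { g | ∃ e ∈ elementarySubgroup R N I, ∃ u ∈ elementarySubgroup R N (⊤ : Ideal R),
        g = u * e * u⁻¹ }

/-- `GL(n,R,I)`: the principal congruence subgroup of level `I`, the kernel of the
reduction homomorphism `GL(n,R) → GL(n,R/I)`. -/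
def congruenceSubgroup (R : Type*) [CommRing R] (N : ℕ) (I : Ideal R) :
    Subgroup (GL (Fin N) R) :=
  (Units.map ((Ideal.Quotient.mk I).mapMatrix.toMonoidHom :
    Matrix (Fin N) (Fin N) R →* Matrix (Fin N) (Fin N) (R ⧸ I))).ker

namespace Thm4A

open scoped commutatorElement

variable {R : Type*} [CommRing R] {n : ℕ}

/-- Shorthand for `transvectionGL`. -/
abbrev TT (i j : Fin n) (hij : i ≠ j) (c : R) : GL (Fin n) R := transvectionGL R n i j hij c

@[simp] lemma TT_val (i j : Fin n) (hij : i ≠ j) (c : R) :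
    ((TT i j hij c : GL (Fin n) R) : Matrix (Fin n) (Fin n) R) = transvection i j c := rfl

lemma TT_mul_same (i j : Fin n) (hij : i ≠ j) (c d : R) :
    TT i j hij c * TT i j hij d = TT i j hij (c + d) :=
  Units.ext (by simp [Units.val_mul, transvection_mul_transvection_same i j hij])

lemma TT_inv (i j : Fin n) (hij : i ≠ j) (c : R) :
    (TT i j hij c)⁻¹ = TT i j hij (-c) :=
  Units.ext rfl

lemma TT_zero (i j : Fin n) (hij : i ≠ j) : TT i j hij (0 : R) = 1 :=
  Units.ext (by simp)

lemma transvection_mul_expand (i j k l : Fin n) (c d : R) :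
    (transvection i j c : Matrix (Fin n) (Fin n) R) * transvection k l d =
      1 + single i j c + single k l d +
        single i j c * single k l d := by
  simp only [transvection, add_mul, mul_add, one_mul, mul_one]
  abel

lemma TT_comm (i j k l : Fin n) (hij : i ≠ j) (hkl : k ≠ l) (hjk : j ≠ k) (hli : l ≠ i)
    (c d : R) : TT i j hij c * TT k l hkl d = TT k l hkl d * TT i j hij c := by
  apply Units.ext
  simp only [Units.val_mul, TT_val, transvection_mul_expand]
  rw [single_mul_single_of_ne (c := c) i j k hjk, single_mul_single_of_ne (c := d) k l i hli]
  abel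

lemma TT_L3 (i j l : Fin n) (hij : i ≠ j) (hjl : j ≠ l) (hil : i ≠ l) (c d : R) :
    TT i j hij c * TT j l hjl d =
      TT i l hil (c * d) * TT j l hjl d * TT i j hij c := by
  apply Units.ext
  simp only [Units.val_mul, TT_val, transvection, add_mul, mul_add, one_mul, mul_one]
  simp only [single_mul_single_same, single_mul_single_of_ne, hjl.symm, hil.symm,
    ne_eq, not_false_eq_true, mul_zero, zero_mul, add_zero, zero_add]
  abel


/-- Chevalley commutator formula: `[t_{ij}(c), t_{jl}(d)] = t_{il}(cd)`. -/
lemma TT_chev (i j l : Fin n) (hij : i ≠ j) (hjl : j ≠ l) (hil : i ≠ l) (c d : R) :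
    ⁅TT i j hij c, TT j l hjl d⁆ = TT i l hil (c * d) := by
  rw [commutatorElement_def]
  calc TT i j hij c * TT j l hjl d * (TT i j hij c)⁻¹ * (TT j l hjl d)⁻¹
      = TT i l hil (c * d) * TT j l hjl d * TT i j hij c * (TT i j hij c)⁻¹ *
        (TT j l hjl d)⁻¹ := by rw [TT_L3 i j l hij hjl hil c d]
    _ = TT i l hil (c * d) := by group

/-- conjugation formula: `t_{ri}(y) t_{ij}(a) t_{ri}(y)⁻¹ = t_{rj}(ya) t_{ij}(a)`. -/
lemma TT_conj₂ (r i j : Fin n) (hri : r ≠ i) (hij : i ≠ j) (hrj : r ≠ j) (y a : R) :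
    TT r i hri y * TT i j hij a * (TT r i hri y)⁻¹ =
      TT r j hrj (y * a) * TT i j hij a := by
  calc TT r i hri y * TT i j hij a * (TT r i hri y)⁻¹
      = (TT r i hri y * TT i j hij a) * (TT r i hri y)⁻¹ := by group
    _ = (TT r j hrj (y * a) * TT i j hij a * TT r i hri y) * (TT r i hri y)⁻¹ := by
        rw [TT_L3 r i j hri hij hrj y a]
    _ = TT r j hrj (y * a) * TT i j hij a := by group

/-- conjugation formula: `t_{js}(x)⁻¹ t_{ij}(a) t_{js}(x) = t_{is}(ax) t_{ij}(a)`. -/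
lemma TT_conj₃ (i j s : Fin n) (hij : i ≠ j) (hjs : j ≠ s) (his : i ≠ s) (a x : R) :
    (TT j s hjs x)⁻¹ * TT i j hij a * TT j s hjs x =
      TT i s his (a * x) * TT i j hij a := by
  have h1 : TT i j hij a * TT j s hjs x =
      TT j s hjs x * (TT i s his (a * x) * TT i j hij a) := by
    rw [TT_L3 i j s hij hjs his a x,
      TT_comm i s j s his hjs hjs.symm his.symm (a * x) x, mul_assoc]
  calc (TT j s hjs x)⁻¹ * TT i j hij a * TT j s hjs x
      = (TT j s hjs x)⁻¹ * (TT i j hij a * TT j s hjs x) := by group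
    _ = (TT j s hjs x)⁻¹ * (TT j s hjs x * (TT i s his (a * x) * TT i j hij a)) := by rw [h1]
    _ = TT i s his (a * x) * TT i j hij a := by group

lemma exists_third (hn : 3 ≤ n) (i j : Fin n) : ∃ k : Fin n, k ≠ i ∧ k ≠ j := by
  by_contra hcon
  push_neg at hcon
  have hsub : (Finset.univ : Finset (Fin n)) ⊆ {i, j} := by
    intro k _
    simp only [Finset.mem_insert, Finset.mem_singleton]
    rcases eq_or_ne k i with h | h
    · exact Or.inl h
    · exact Or.inr (hcon k h)
  have h2 : Fintype.card (Fin n) ≤ ({i, j} : Finset (Fin n)).card := by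
    simpa [Finset.card_univ] using Finset.card_le_card hsub
  have h3 : ({i, j} : Finset (Fin n)).card ≤ 2 :=
    (Finset.card_insert_le _ _).trans (by simp)
  simp only [Fintype.card_fin] at h2
  omega


lemma mem_E_of {I : Ideal R} {i j : Fin n} (hij : i ≠ j) {c : R} (hc : c ∈ I) :
    TT i j hij c ∈ elementarySubgroup R n I :=
  Subgroup.subset_closure ⟨i, j, hij, c, hc, rfl⟩

lemma E_le_E_top (I : Ideal R) :
    elementarySubgroup R n I ≤ elementarySubgroup R n ⊤ := by
  refine (Subgroup.closure_le _).mpr ?_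
  rintro g ⟨i, j, hij, c, _, rfl⟩
  exact mem_E_of hij trivial

lemma E_le_rel (I : Ideal R) :
    elementarySubgroup R n I ≤ relativeElementarySubgroup R n I := by
  refine (Subgroup.closure_le _).mpr ?_
  intro g hg
  exact Subgroup.subset_closure
    ⟨g, Subgroup.subset_closure hg, 1, one_mem _, by group⟩

lemma rel_le_E_top (I : Ideal R) :
    relativeElementarySubgroup R n I ≤ elementarySubgroup R n ⊤ := by
  refine (Subgroup.closure_le _).mpr ?_
  rintro g ⟨e, he, u, hu, rfl⟩
  exact mul_mem (mul_mem hu (E_le_E_top I he)) (inv_mem hu)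

lemma conj_mem_rel {I : Ideal R} {u g : GL (Fin n) R}
    (hu : u ∈ elementarySubgroup R n ⊤) (hg : g ∈ relativeElementarySubgroup R n I) :
    u * g * u⁻¹ ∈ relativeElementarySubgroup R n I := by
  induction hg using Subgroup.closure_induction with
  | mem x hx =>
    obtain ⟨e, he, v, hv, rfl⟩ := hx
    have : u * (v * e * v⁻¹) * u⁻¹ = (u * v) * e * (u * v)⁻¹ := by group
    rw [this]
    exact Subgroup.subset_closure ⟨e, he, u * v, mul_mem hu hv, rfl⟩
  | one => simpa using one_mem _
  | mul x y hx hy ihx ihy =>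
    have : u * (x * y) * u⁻¹ = (u * x * u⁻¹) * (u * y * u⁻¹) := by group
    rw [this]; exact mul_mem ihx ihy
  | inv x hx ihx =>
    have : u * x⁻¹ * u⁻¹ = (u * x * u⁻¹)⁻¹ := by group
    rw [this]; exact inv_mem ihx

/-- The subgroup of elements `g` of `E(n,R)` with `[g,w] ∈ E(n,R,J)`. -/
def Hsub (J : Ideal R) (w : GL (Fin n) R) : Subgroup (GL (Fin n) R) where
  carrier := {g | g ∈ elementarySubgroup R n ⊤ ∧
    ⁅g, w⁆ ∈ relativeElementarySubgroup R n J}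
  one_mem' := by
    refine ⟨one_mem _, ?_⟩
    have : ⁅(1 : GL (Fin n) R), w⁆ = 1 := by group
    rw [this]; exact one_mem _
  mul_mem' := by
    rintro g h ⟨hg1, hg2⟩ ⟨hh1, hh2⟩
    refine ⟨mul_mem hg1 hh1, ?_⟩
    have : ⁅g * h, w⁆ = g * ⁅h, w⁆ * g⁻¹ * ⁅g, w⁆ := by group
    rw [this]
    exact mul_mem (conj_mem_rel hg1 hh2) hg2
  inv_mem' := by
    rintro g ⟨hg1, hg2⟩
    refine ⟨inv_mem hg1, ?_⟩
    have : ⁅g⁻¹, w⁆ = g⁻¹ * ⁅g, w⁆⁻¹ * (g⁻¹)⁻¹ := by group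
    rw [this]
    exact conj_mem_rel (inv_mem hg1) (inv_mem hg2)

lemma mem_Hsub_top {J : Ideal R} {w g : GL (Fin n) R} (hg : g ∈ Hsub J w) :
    g ∈ elementarySubgroup R n ⊤ := hg.1

lemma mem_Hsub_comm {J : Ideal R} {w g : GL (Fin n) R} (hg : g ∈ Hsub J w) :
    ⁅g, w⁆ ∈ relativeElementarySubgroup R n J := hg.2

lemma rel_le_Hsub {J : Ideal R} {w : GL (Fin n) R} (hw : w ∈ elementarySubgroup R n ⊤) :
    relativeElementarySubgroup R n J ≤ Hsub J w := by
  intro x hx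
  refine ⟨rel_le_E_top J hx, ?_⟩
  have : ⁅x, w⁆ = x * (w * x⁻¹ * w⁻¹) := by group
  rw [this]
  exact mul_mem hx (conj_mem_rel hw (inv_mem hx))

section RelMod

variable {J : Ideal R}

lemma rel_mul {x x' y y' : GL (Fin n) R} (hx : x ∈ elementarySubgroup R n ⊤)
    (h1 : x * x'⁻¹ ∈ relativeElementarySubgroup R n J)
    (h2 : y * y'⁻¹ ∈ relativeElementarySubgroup R n J) :
    (x * y) * (x' * y')⁻¹ ∈ relativeElementarySubgroup R n J := by
  have : (x * y) * (x' * y')⁻¹ = x * (y * y'⁻¹) * x⁻¹ * (x * x'⁻¹) := by group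
  rw [this]
  exact mul_mem (conj_mem_rel hx h2) h1

lemma rel_inv {x x' : GL (Fin n) R} (hx : x ∈ elementarySubgroup R n ⊤)
    (h1 : x * x'⁻¹ ∈ relativeElementarySubgroup R n J) :
    x⁻¹ * (x'⁻¹)⁻¹ ∈ relativeElementarySubgroup R n J := by
  have : x⁻¹ * (x'⁻¹)⁻¹ = x⁻¹ * (x * x'⁻¹)⁻¹ * (x⁻¹)⁻¹ := by group
  rw [this]
  exact conj_mem_rel (inv_mem hx) (inv_mem h1)

lemma rel_commutator {x x' y y' : GL (Fin n) R}
    (hx : x ∈ elementarySubgroup R n ⊤) (hy : y ∈ elementarySubgroup R n ⊤)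
    (h1 : x * x'⁻¹ ∈ relativeElementarySubgroup R n J)
    (h2 : y * y'⁻¹ ∈ relativeElementarySubgroup R n J) :
    ⁅x, y⁆ * ⁅x', y'⁆⁻¹ ∈ relativeElementarySubgroup R n J := by
  have e1 := rel_mul hx h1 h2
  have e2 := rel_inv hx h1
  have e3 := rel_inv hy h2
  have e4 := rel_mul (mul_mem hx hy) e1 e2
  have e5 := rel_mul (mul_mem (mul_mem hx hy) (inv_mem hx)) e4 e3
  simpa only [commutatorElement_def] using e5

end RelMod


section Main

variable {A B : Ideal R} {p q : R}

lemma z_q_mem {i j : Fin n} (hij : i ≠ j) (hji : j ≠ i) (x : R) {c : R} (hc : c ∈ A * B) :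
    TT j i hji (-x) * TT i j hij c * TT j i hji x ∈ relativeElementarySubgroup R n (A * B) := by
  apply Subgroup.subset_closure
  refine ⟨TT i j hij c, mem_E_of hij hc, TT j i hji (-x), mem_E_of hji trivial, ?_⟩
  rw [TT_inv, neg_neg]

lemma conj_gen_mem (hn : 3 ≤ n) (hp : p ∈ A) (hq : q ∈ B) (hpq : p + q = 1)
    {w : GL (Fin n) R} (hw : w ∈ elementarySubgroup R n ⊤)
    (hEA : elementarySubgroup R n A ≤ Hsub (A * B) w)
    (r s : Fin n) (hrs : r ≠ s) (x : R) (i j : Fin n) (hij : i ≠ j) {a : R} (ha : a ∈ A) :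
    (TT r s hrs x)⁻¹ * TT i j hij a * TT r s hrs x ∈ Hsub (A * B) w := by
  rw [TT_inv]
  by_cases hsi : s = i
  · have hsi' : i = s := hsi.symm
    subst hsi'
    by_cases hrj : r = j
    · have hrj' : j = r := hrj.symm
      subst hrj'
      -- the "opposite root" case: conjugation by t_{ji}(x)
      obtain ⟨h, hhi, hhj⟩ := exists_third hn i j
      have hih : i ≠ h := Ne.symm hhi
      have hjh : j ≠ h := Ne.symm hhj
      have hAinv : (TT j i hrs (-x))⁻¹ = TT j i hrs x := by rw [TT_inv, neg_neg]
      have hA : TT j i hrs (-x) = (TT j i hrs x)⁻¹ := (TT_inv j i hrs x).symm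
      have split : TT i j hij a = TT i j hij (p * a) * TT i j hij (q * a) := by
        rw [TT_mul_same, ← add_mul, hpq, one_mul]
      have hchev : TT i j hij (p * a) = ⁅TT i h hih a, TT h j hhj p⁆ := by
        rw [mul_comm p a]
        exact (TT_chev i h j hih hhj hij a p).symm
      have hc₁' := TT_conj₂ j i h hrs hih hjh (-x) a
      rw [hAinv] at hc₁'
      have hc₂' : TT j i hrs (-x) * TT h j hhj p * TT j i hrs x =
          TT h i hhi (p * x) * TT h j hhj p := by
        rw [hA]
        exact TT_conj₃ h j i hhj hrs hhi p x
      have e : TT j i hrs (-x) * TT i j hij (p * a) * TT j i hrs x =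
          ⁅TT j h hjh ((-x) * a) * TT i h hih a, TT h i hhi (p * x) * TT h j hhj p⁆ := by
        rw [hchev, ← hc₁', ← hc₂', hA]
        group
      have hZ : TT j i hrs (-x) * TT i j hij (p * a) * TT j i hrs x ∈ Hsub (A * B) w := by
        rw [e]
        have m₁ : TT j h hjh ((-x) * a) * TT i h hih a ∈ Hsub (A * B) w :=
          hEA (mul_mem (mem_E_of hjh (Ideal.mul_mem_left _ _ ha)) (mem_E_of hih ha))
        have m₂ : TT h i hhi (p * x) * TT h j hhj p ∈ Hsub (A * B) w :=
          hEA (mul_mem (mem_E_of hhi (Ideal.mul_mem_right _ _ hp)) (mem_E_of hhj hp))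
        rw [commutatorElement_def]
        exact mul_mem (mul_mem (mul_mem m₁ m₂) (inv_mem m₁)) (inv_mem m₂)
      have hqa : q * a ∈ A * B := by rw [mul_comm q a]; exact Ideal.mul_mem_mul ha hq
      have hNmem : TT j i hrs (-x) * TT i j hij (q * a) * TT j i hrs x ∈
          relativeElementarySubgroup R n (A * B) := z_q_mem hij hrs x hqa
      have total : TT j i hrs (-x) * TT i j hij a * TT j i hrs x =
          (TT j i hrs (-x) * TT i j hij (p * a) * TT j i hrs x) *
            (TT j i hrs (-x) * TT i j hij (q * a) * TT j i hrs x) := by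
        rw [split, hA]
        group
      rw [total]
      exact mul_mem hZ (rel_le_Hsub hw hNmem)
    · -- s = i, r ≠ j
      have e := TT_conj₂ r i j hrs hij hrj (-x) a
      rw [TT_inv, neg_neg] at e
      rw [e]
      exact hEA (mul_mem (mem_E_of hrj (Ideal.mul_mem_left _ _ ha)) (mem_E_of hij ha))
  · by_cases hrj : r = j
    · have hrj' : j = r := hrj.symm
      subst hrj'
      have his : i ≠ s := Ne.symm hsi
      have e := TT_conj₃ i j s hij hrs his a x
      rw [TT_inv] at e
      rw [e]
      exact hEA (mul_mem (mem_E_of his (Ideal.mul_mem_right _ _ ha)) (mem_E_of hij ha))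
    · -- disjoint positions: everything commutes
      have hcomm := TT_comm r s i j hrs hij hsi (Ne.symm hrj) (-x) a
      have e : TT r s hrs (-x) * TT i j hij a * TT r s hrs x = TT i j hij a := by
        rw [hcomm, mul_assoc, TT_mul_same, neg_add_cancel, TT_zero, mul_one]
      rw [e]
      exact hEA (mem_E_of hij ha)

lemma claim_gen (hn : 3 ≤ n) (hp : p ∈ A) (hq : q ∈ B) (hpq : p + q = 1)
    (r s : Fin n) (hrs : r ≠ s) (x : R) {w : GL (Fin n) R}
    (hw : w ∈ elementarySubgroup R n ⊤)
    (hEA : elementarySubgroup R n A ≤ Hsub (A * B) w) :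
    elementarySubgroup R n A ≤ Hsub (A * B) (TT r s hrs x * w * (TT r s hrs x)⁻¹) := by
  refine (Subgroup.closure_le _).mpr ?_
  rintro g ⟨i, j, hij, a, ha, rfl⟩
  refine ⟨mem_E_of hij trivial, ?_⟩
  have key : ⁅TT i j hij a, TT r s hrs x * w * (TT r s hrs x)⁻¹⁆ =
      TT r s hrs x * ⁅(TT r s hrs x)⁻¹ * TT i j hij a * TT r s hrs x, w⁆ *
        (TT r s hrs x)⁻¹ := by group
  rw [key]
  exact conj_mem_rel (mem_E_of hrs trivial)
    (conj_gen_mem hn hp hq hpq hw hEA r s hrs x i j hij ha).2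

lemma claim_all (hn : 3 ≤ n) (hp : p ∈ A) (hq : q ∈ B) (hpq : p + q = 1)
    {v : GL (Fin n) R} (hv : v ∈ elementarySubgroup R n ⊤) :
    ∀ w, w ∈ elementarySubgroup R n ⊤ → elementarySubgroup R n A ≤ Hsub (A * B) w →
      elementarySubgroup R n A ≤ Hsub (A * B) (v * w * v⁻¹) := by
  have main : (∀ w, w ∈ elementarySubgroup R n ⊤ →
      elementarySubgroup R n A ≤ Hsub (A * B) w →
      elementarySubgroup R n A ≤ Hsub (A * B) (v * w * v⁻¹)) ∧
      (∀ w, w ∈ elementarySubgroup R n ⊤ →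
      elementarySubgroup R n A ≤ Hsub (A * B) w →
      elementarySubgroup R n A ≤ Hsub (A * B) (v⁻¹ * w * (v⁻¹)⁻¹)) := by
    induction hv using Subgroup.closure_induction with
    | mem g hg =>
      obtain ⟨r, s, hrs, x, -, rfl⟩ := hg
      constructor
      · intro w hw hEA
        exact claim_gen hn hp hq hpq r s hrs x hw hEA
      · intro w hw hEA
        rw [TT_inv]
        exact claim_gen hn hp hq hpq r s hrs (-x) hw hEA
    | one =>
      constructor <;> · intro w hw hEA; simpa using hEA
    | mul x y hx hy ihx ihy =>
      constructor
      · intro w hw hEA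
        have e : x * y * w * (x * y)⁻¹ = x * (y * w * y⁻¹) * x⁻¹ := by group
        rw [e]
        exact ihx.1 _ (mul_mem (mul_mem hy hw) (inv_mem hy)) (ihy.1 w hw hEA)
      · intro w hw hEA
        have e : (x * y)⁻¹ * w * ((x * y)⁻¹)⁻¹ = y⁻¹ * (x⁻¹ * w * (x⁻¹)⁻¹) * (y⁻¹)⁻¹ := by
          group
        rw [e]
        exact ihy.2 _ (mul_mem (mul_mem (inv_mem hx) hw) (inv_mem (inv_mem hx)))
          (ihx.2 w hw hEA)
    | inv x hx ihx =>
      constructor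
      · exact ihx.2
      · intro w hw hEA
        simp only [inv_inv]
        exact ihx.1 w hw hEA
  exact main.1

lemma base_case (hn : 3 ≤ n) (hp : p ∈ A) (hq : q ∈ B) (hpq : p + q = 1)
    (k l : Fin n) (hkl : k ≠ l) {b : R} (hb : b ∈ B) :
    elementarySubgroup R n A ≤ Hsub (A * B) (TT k l hkl b) := by
  refine (Subgroup.closure_le _).mpr ?_
  rintro g ⟨i, j, hij, a, ha, rfl⟩
  refine ⟨mem_E_of hij trivial, ?_⟩
  by_cases hjk : j = k
  · subst hjk
    by_cases hil : i = l
    · subst hil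
      -- opposite case: ⁅t_{ij}(a), t_{ji}(b)⁆
      obtain ⟨h, hhi, hhj⟩ := exists_third hn i j
      have hih : i ≠ h := Ne.symm hhi
      have hjh : j ≠ h := Ne.symm hhj
      have hw : TT j i hkl b ∈ elementarySubgroup R n ⊤ := mem_E_of hkl trivial
      have split : TT i j hij a = TT i j hij (p * a) * TT i j hij (q * a) := by
        rw [TT_mul_same, ← add_mul, hpq, one_mul]
      have hqa : q * a ∈ A * B := by rw [mul_comm q a]; exact Ideal.mul_mem_mul ha hq
      have hqmem : TT i j hij (q * a) ∈ relativeElementarySubgroup R n (A * B) :=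
        E_le_rel _ (mem_E_of hij hqa)
      have hcomm_q : ⁅TT i j hij (q * a), TT j i hkl b⁆ ∈
          relativeElementarySubgroup R n (A * B) := by
        have e : ⁅TT i j hij (q * a), TT j i hkl b⁆ =
            TT i j hij (q * a) * (TT j i hkl b * (TT i j hij (q * a))⁻¹ *
              (TT j i hkl b)⁻¹) := by group
        rw [e]
        exact mul_mem hqmem (conj_mem_rel hw (inv_mem hqmem))
      have hcomm_p : ⁅TT i j hij (p * a), TT j i hkl b⁆ ∈
          relativeElementarySubgroup R n (A * B) := by
        have e : ⁅TT i j hij (p * a), TT j i hkl b⁆ =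
            ⁅TT j i hkl b, TT i j hij (p * a)⁆⁻¹ := by rw [commutatorElement_inv]
        rw [e]
        apply inv_mem
        have hchev : TT i j hij (p * a) = ⁅TT i h hih a, TT h j hhj p⁆ := by
          rw [mul_comm p a]
          exact (TT_chev i h j hih hhj hij a p).symm
        have keyid : ⁅TT j i hkl b, ⁅TT i h hih a, TT h j hhj p⁆⁆ =
            ⁅TT j i hkl b * TT i h hih a * (TT j i hkl b)⁻¹,
              TT j i hkl b * TT h j hhj p * (TT j i hkl b)⁻¹⁆ *
              ⁅TT i h hih a, TT h j hhj p⁆⁻¹ := by group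
        rw [hchev, keyid, TT_inv j i hkl b]
        have hc₁ := TT_conj₂ j i h hkl hih hjh b a
        rw [TT_inv] at hc₁
        have hc₂ := TT_conj₃ h j i hhj hkl hhi p (-b)
        rw [TT_inv, neg_neg] at hc₂
        rw [hc₁, hc₂, ← hchev]
        have hn₁ : TT j h hjh (b * a) ∈ relativeElementarySubgroup R n (A * B) := by
          have : b * a ∈ A * B := by rw [mul_comm b a]; exact Ideal.mul_mem_mul ha hb
          exact E_le_rel _ (mem_E_of hjh this)
        have hm : TT h i hhi (p * -b) ∈ relativeElementarySubgroup R n (A * B) := by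
          have : p * -b ∈ A * B := by
            have := Ideal.mul_mem_mul hp hb
            simpa [mul_neg] using neg_mem this
          exact E_le_rel _ (mem_E_of hhi this)
        have h1 : (TT j h hjh (b * a) * TT i h hih a) * (TT i h hih a)⁻¹ ∈
            relativeElementarySubgroup R n (A * B) := by
          have e1 : (TT j h hjh (b * a) * TT i h hih a) * (TT i h hih a)⁻¹ =
              TT j h hjh (b * a) := by group
          rw [e1]; exact hn₁
        have h2 : (TT h i hhi (p * -b) * TT h j hhj p) * (TT h j hhj p)⁻¹ ∈
            relativeElementarySubgroup R n (A * B) := by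
          have e2 : (TT h i hhi (p * -b) * TT h j hhj p) * (TT h j hhj p)⁻¹ =
              TT h i hhi (p * -b) := by group
          rw [e2]; exact hm
        have := rel_commutator
          (mul_mem (mem_E_of hjh trivial) (mem_E_of hih trivial))
          (mul_mem (mem_E_of hhi trivial) (mem_E_of hhj trivial)) h1 h2
        rw [hchev]
        exact this
      have red : ⁅TT i j hij a, TT j i hkl b⁆ =
          TT i j hij (p * a) * ⁅TT i j hij (q * a), TT j i hkl b⁆ *
            (TT i j hij (p * a))⁻¹ * ⁅TT i j hij (p * a), TT j i hkl b⁆ := by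
        rw [split]; group
      rw [red]
      exact mul_mem (conj_mem_rel (mem_E_of hij trivial) hcomm_q) hcomm_p
    · -- j = k, i ≠ l
      rw [TT_chev i j l hij hkl hil a b]
      exact E_le_rel _ (mem_E_of hil (Ideal.mul_mem_mul ha hb))
  · by_cases hil : i = l
    · subst hil
      have hkj : k ≠ j := Ne.symm hjk
      have e : ⁅TT i j hij a, TT k i hkl b⁆ = ⁅TT k i hkl b, TT i j hij a⁆⁻¹ := by
        rw [commutatorElement_inv]
      rw [e, TT_chev k i j hkl hij hkj b a]
      have : b * a ∈ A * B := by rw [mul_comm b a]; exact Ideal.mul_mem_mul ha hb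
      exact inv_mem (E_le_rel _ (mem_E_of hkj this))
    · have hcomm := TT_comm i j k l hij hkl hjk (Ne.symm hil) a b
      have e : ⁅TT i j hij a, TT k l hkl b⁆ = 1 := by
        rw [commutatorElement_def, hcomm]; group
      rw [e]; exact one_mem _

lemma main_lemma (hn : 3 ≤ n) (hp : p ∈ A) (hq : q ∈ B) (hpq : p + q = 1)
    {v : GL (Fin n) R} (hv : v ∈ elementarySubgroup R n ⊤) (k l : Fin n) (hkl : k ≠ l)
    {b : R} (hb : b ∈ B) :
    elementarySubgroup R n A ≤ Hsub (A * B) (v * TT k l hkl b * v⁻¹) :=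
  claim_all hn hp hq hpq hv _ (mem_E_of hkl trivial) (base_case hn hp hq hpq k l hkl hb)

lemma step2 (hn : 3 ≤ n) (hp : p ∈ A) (hq : q ∈ B) (hpq : p + q = 1)
    {g : GL (Fin n) R} (hg : g ∈ elementarySubgroup R n A)
    {h' : GL (Fin n) R} (hh : h' ∈ relativeElementarySubgroup R n B) :
    ⁅g, h'⁆ ∈ relativeElementarySubgroup R n (A * B) := by
  suffices hs : relativeElementarySubgroup R n B ≤ Hsub (A * B) g by
    have h2 := (hs hh).2
    have e : ⁅g, h'⁆ = ⁅h', g⁆⁻¹ := by rw [commutatorElement_inv]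
    rw [e]; exact inv_mem h2
  refine (Subgroup.closure_le _).mpr ?_
  rintro z ⟨e, he, u, hu, rfl⟩
  induction he using Subgroup.closure_induction with
  | mem t ht =>
    obtain ⟨k, l, hkl, b, hb, rfl⟩ := ht
    have hEA := main_lemma hn hp hq hpq hu k l hkl hb
    have h1 : ⁅g, u * TT k l hkl b * u⁻¹⁆ ∈ relativeElementarySubgroup R n (A * B) :=
      (hEA hg).2
    refine ⟨mul_mem (mul_mem hu (mem_E_of hkl trivial)) (inv_mem hu), ?_⟩
    have e2 : ⁅u * TT k l hkl b * u⁻¹, g⁆ = ⁅g, u * TT k l hkl b * u⁻¹⁆⁻¹ := by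
      rw [commutatorElement_inv]
    rw [e2]; exact inv_mem h1
  | one => simpa using one_mem (Hsub (A * B) g)
  | mul x y hx hy ihx ihy =>
    have e : u * (x * y) * u⁻¹ = (u * x * u⁻¹) * (u * y * u⁻¹) := by group
    rw [e]; exact mul_mem ihx ihy
  | inv x hx ihx =>
    have e : u * x⁻¹ * u⁻¹ = (u * x * u⁻¹)⁻¹ := by group
    rw [e]; exact inv_mem ihx

lemma step3 (hn : 3 ≤ n) (hp : p ∈ A) (hq : q ∈ B) (hpq : p + q = 1)
    {g : GL (Fin n) R} (hg : g ∈ relativeElementarySubgroup R n A)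
    {h' : GL (Fin n) R} (hh : h' ∈ relativeElementarySubgroup R n B) :
    ⁅g, h'⁆ ∈ relativeElementarySubgroup R n (A * B) := by
  have hcl : relativeElementarySubgroup R n A ≤ Hsub (A * B) h' := by
    refine (Subgroup.closure_le _).mpr ?_
    rintro z ⟨e, he, u, hu, rfl⟩
    refine ⟨mul_mem (mul_mem hu (E_le_E_top A he)) (inv_mem hu), ?_⟩
    have key : ⁅u * e * u⁻¹, h'⁆ = u * ⁅e, u⁻¹ * h' * (u⁻¹)⁻¹⁆ * u⁻¹ := by group
    rw [key]
    exact conj_mem_rel hu (step2 hn hp hq hpq he (conj_mem_rel (inv_mem hu) hh))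
  exact (hcl hg).2

lemma conj_mem_comm {u g : GL (Fin n) R} (hu : u ∈ elementarySubgroup R n ⊤)
    (hg : g ∈ ⁅relativeElementarySubgroup R n A, relativeElementarySubgroup R n B⁆) :
    u * g * u⁻¹ ∈ ⁅relativeElementarySubgroup R n A, relativeElementarySubgroup R n B⁆ := by
  rw [Subgroup.commutator_def] at hg
  induction hg using Subgroup.closure_induction with
  | mem z hz =>
    obtain ⟨g₁, h₁, g₂, h₂, rfl⟩ := hz
    have e : u * ⁅g₁, g₂⁆ * u⁻¹ = ⁅u * g₁ * u⁻¹, u * g₂ * u⁻¹⁆ := by group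
    rw [e]
    exact Subgroup.commutator_mem_commutator (conj_mem_rel hu h₁) (conj_mem_rel hu h₂)
  | one => simpa using one_mem _
  | mul x y hx hy ihx ihy =>
    have e : u * (x * y) * u⁻¹ = (u * x * u⁻¹) * (u * y * u⁻¹) := by group
    rw [e]; exact mul_mem ihx ihy
  | inv x hx ihx =>
    have e : u * x⁻¹ * u⁻¹ = (u * x * u⁻¹)⁻¹ := by group
    rw [e]; exact inv_mem ihx

lemma EAB_le_comm (hn : 3 ≤ n) :
    elementarySubgroup R n (A * B) ≤
      ⁅relativeElementarySubgroup R n A, relativeElementarySubgroup R n B⁆ := by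
  refine (Subgroup.closure_le _).mpr ?_
  rintro g ⟨i, j, hij, c, hc, rfl⟩
  refine Submodule.mul_induction_on hc ?_ ?_
  · intro a ha b hb
    obtain ⟨h, hhi, hhj⟩ := exists_third hn i j
    show TT i j hij (a * b) ∈ _
    rw [← TT_chev i h j (Ne.symm hhi) hhj hij a b]
    exact Subgroup.commutator_mem_commutator (E_le_rel A (mem_E_of (Ne.symm hhi) ha))
      (E_le_rel B (mem_E_of hhj hb))
  · intro x y hx hy
    show TT i j hij (x + y) ∈ _
    rw [← TT_mul_same]
    exact mul_mem hx hy

end Main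

end Thm4A

/-- Theorem 4A (commutative case): for comaximal ideals `A + B = R` and `n ≥ 3`,
`[E(n,R,A), E(n,R,B)] = E(n,R,AB)`. -/
theorem relative_commutator_of_comaximal
    (R : Type*) [CommRing R] (N : ℕ) (hN : 3 ≤ N)
    (A B : Ideal R) (hAB : A ⊔ B = ⊤) :
    ⁅relativeElementarySubgroup R N A, relativeElementarySubgroup R N B⁆ =
      relativeElementarySubgroup R N (A * B) := by
  have h1 : (1 : R) ∈ A ⊔ B := hAB ▸ Submodule.mem_top
  obtain ⟨p, hp, q, hq, hpq⟩ := Submodule.mem_sup.mp h1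
  apply le_antisymm
  · exact Subgroup.commutator_le.mpr fun g hg h hh => Thm4A.step3 hN hp hq hpq hg hh
  · refine (Subgroup.closure_le _).mpr ?_
    rintro g ⟨e, he, u, hu, rfl⟩
    exact Thm4A.conj_mem_comm hu (Thm4A.EAB_le_comm hN he)
end

section
/- Let R be a commutative ring, n ≥ 3, and A, B two ideals of R. Then [E(n,R,A), GL(n,R,B)] = [E(n,R,A), E(n,R,B)], where GL(n,R,B) is the principal congruence subgroup of level B. -/
open Matrix

namespace RelComm

open scoped commutatorElement

variable {R : Type*} [CommRing R] {N : ℕ}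

/-! ### Matrix-level toolkit: rank one unipotents -/

lemma vecMulVec_mul_vecMulVec (u z u' z' : Fin N → R) :
    vecMulVec u z * vecMulVec u' z' = (z ⬝ᵥ u') • vecMulVec u z' := by
  ext k l
  simp only [Matrix.mul_apply, vecMulVec_apply, Matrix.smul_apply, smul_eq_mul, dotProduct,
    Finset.sum_mul]
  exact Finset.sum_congr rfl fun s _ => by ring

lemma vecMulVec_add_right (u z z' : Fin N → R) :
    vecMulVec u (z + z') = vecMulVec u z + vecMulVec u z' := by
  ext k l; simp [vecMulVec_apply, mul_add]

lemma vecMulVec_add_left (u u' z : Fin N → R) :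
    vecMulVec (u + u') z = vecMulVec u z + vecMulVec u' z := by
  ext k l; simp [vecMulVec_apply, add_mul]

/-- A unipotent unit `1 + X` with `X * X = 0`. -/
def unipUnit (X : Matrix (Fin N) (Fin N) R) (hX : X * X = 0) : GL (Fin N) R :=
  ⟨1 + X, 1 - X,
    by rw [add_mul, one_mul, mul_sub, mul_one, hX, sub_zero]; abel,
    by rw [sub_mul, one_mul, mul_add, mul_one, hX, add_zero]; abel⟩

@[simp] lemma unipUnit_val (X : Matrix (Fin N) (Fin N) R) (hX) : (unipUnit X hX).val = 1 + X := rfl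
@[simp] lemma unipUnit_inv_val (X : Matrix (Fin N) (Fin N) R) (hX) :
    ((unipUnit X hX)⁻¹).val = 1 - X := rfl

lemma unipUnit_mul (X Y : Matrix (Fin N) (Fin N) R) (hX hY) (hXY : X * Y = 0) (hYX : Y * X = 0) :
    unipUnit X hX * unipUnit Y hY = unipUnit (X + Y) (by
      rw [add_mul, mul_add, mul_add, hX, hY, hXY, hYX]; simp) := by
  ext : 1
  show (1 + X) * (1 + Y) = 1 + (X + Y)
  rw [add_mul, one_mul, mul_add, mul_one, hXY]
  abel

/-- The master identity: if `X² = Y² = YX = 0` then `⁅1+X, 1+Y⁆ = 1 + XY`. -/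
lemma unipUnit_commutator (X Y : Matrix (Fin N) (Fin N) R) (hX : X * X = 0) (hY : Y * Y = 0)
    (hYX : Y * X = 0) :
    ⁅unipUnit X hX, unipUnit Y hY⁆ =
      unipUnit (X * Y) (by rw [mul_assoc, ← mul_assoc Y, hYX, zero_mul, mul_zero]) := by
  have hX' : ∀ m : Matrix (Fin N) (Fin N) R, X * (X * m) = 0 := fun m => by
    rw [← mul_assoc, hX, zero_mul]
  have hY' : ∀ m : Matrix (Fin N) (Fin N) R, Y * (Y * m) = 0 := fun m => by
    rw [← mul_assoc, hY, zero_mul]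
  have hYX' : ∀ m : Matrix (Fin N) (Fin N) R, Y * (X * m) = 0 := fun m => by
    rw [← mul_assoc, hYX, zero_mul]
  ext : 1
  show ((unipUnit X hX).val * (unipUnit Y hY).val * ((unipUnit X hX)⁻¹).val *
      ((unipUnit Y hY)⁻¹).val) = 1 + X * Y
  simp only [unipUnit_val, unipUnit_inv_val]
  simp only [mul_add, add_mul, sub_mul, mul_sub, one_mul, mul_one, mul_assoc, hX, hY, hYX,
    hX', hY', hYX', mul_zero, zero_mul, add_zero, zero_add, sub_zero, zero_sub]
  abel

/-- `rk1 u z h` is the rank-one unipotent `1 + u zᵀ`, for `zᵀu = 0`. -/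
def rk1 (u z : Fin N → R) (h : z ⬝ᵥ u = 0) : GL (Fin N) R :=
  unipUnit (vecMulVec u z) (by rw [vecMulVec_mul_vecMulVec, h, zero_smul])

@[simp] lemma rk1_val (u z : Fin N → R) (h) : (rk1 u z h).val = 1 + vecMulVec u z := rfl
@[simp] lemma rk1_inv_val (u z : Fin N → R) (h) :
    ((rk1 u z h)⁻¹).val = 1 - vecMulVec u z := rfl

lemma rk1_zero (u : Fin N → R) (h) : rk1 u 0 h = 1 := by
  ext : 1
  show 1 + vecMulVec u 0 = 1
  have : vecMulVec u (0 : Fin N → R) = 0 := by ext k l; simp [vecMulVec_apply]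
  rw [this, add_zero]

lemma rk1_mul_left (u z z' : Fin N → R) (hz : z ⬝ᵥ u = 0) (hz' : z' ⬝ᵥ u = 0) (hs) :
    rk1 u z hz * rk1 u z' hz' = rk1 u (z + z') hs := by
  unfold rk1
  rw [unipUnit_mul _ _ _ _ (by rw [vecMulVec_mul_vecMulVec, hz, zero_smul])
    (by rw [vecMulVec_mul_vecMulVec, hz', zero_smul])]
  congr 1
  rw [vecMulVec_add_right]

lemma rk1_mul_right (u u' z : Fin N → R) (hu : z ⬝ᵥ u = 0) (hu' : z ⬝ᵥ u' = 0) (hs) :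
    rk1 u z hu * rk1 u' z hu' = rk1 (u + u') z hs := by
  unfold rk1
  rw [unipUnit_mul _ _ _ _ (by rw [vecMulVec_mul_vecMulVec, hu', zero_smul])
    (by rw [vecMulVec_mul_vecMulVec, hu, zero_smul])]
  congr 1
  rw [vecMulVec_add_left]

lemma transvectionGL_eq_rk1 (i j : Fin N) (hij : i ≠ j) (c : R) :
    transvectionGL R N i j hij c =
      rk1 (Pi.single i 1) (Pi.single j c)
        (by rw [single_dotProduct, Pi.single_apply, if_neg (Ne.symm hij), mul_zero]) := by
  ext : 1
  show Matrix.transvection i j c = 1 + vecMulVec (Pi.single i 1) (Pi.single j c)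
  rw [Matrix.transvection]
  congr 1
  ext k l
  by_cases h1 : k = i
  · subst h1
    by_cases h2 : l = j
    · subst h2
      simp [Matrix.single, vecMulVec_apply]
    · simp [Matrix.single, vecMulVec_apply, h2, Ne.symm h2]
  · simp [Matrix.single, vecMulVec_apply, h1, Ne.symm h1]

lemma transvectionGL_mul_same (i j : Fin N) (hij : i ≠ j) (c d : R) :
    transvectionGL R N i j hij c * transvectionGL R N i j hij d =
      transvectionGL R N i j hij (c + d) := by
  ext : 1
  exact Matrix.transvection_mul_transvection_same i j hij c d

/-- Steinberg relation: `⁅t_{km}(α), t_{ml}(β)⁆ = t_{kl}(αβ)` for distinct `k, l, m`. -/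
lemma steinberg (k l m : Fin N) (hkm : k ≠ m) (hml : m ≠ l) (hkl : k ≠ l) (α β : R) :
    ⁅transvectionGL R N k m hkm α, transvectionGL R N m l hml β⁆ =
      transvectionGL R N k l hkl (α * β) := by
  rw [transvectionGL_eq_rk1, transvectionGL_eq_rk1, transvectionGL_eq_rk1]
  unfold rk1
  rw [unipUnit_commutator _ _ _ _
    (by rw [vecMulVec_mul_vecMulVec, single_dotProduct, Pi.single_apply,
      if_neg (Ne.symm hkl), mul_zero, zero_smul])]
  · congr 1
    rw [vecMulVec_mul_vecMulVec, single_dotProduct, Pi.single_apply, if_pos rfl, mul_one]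
    ext a b
    simp only [Matrix.smul_apply, vecMulVec_apply, Pi.single_apply, smul_eq_mul]
    split_ifs <;> ring

/-! ### Subgroup-level toolkit -/

variable {I J A B : Ideal R}

lemma transvectionGL_mem_elementary {i j : Fin N} (hij : i ≠ j) {c : R} (hc : c ∈ I) :
    transvectionGL R N i j hij c ∈ elementarySubgroup R N I :=
  Subgroup.subset_closure ⟨i, j, hij, c, hc, rfl⟩

lemma elementary_mono (hIJ : I ≤ J) : elementarySubgroup R N I ≤ elementarySubgroup R N J :=
  Subgroup.closure_mono fun g ⟨i, j, hij, c, hc, hg⟩ => ⟨i, j, hij, c, hIJ hc, hg⟩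

lemma elementary_le_top : elementarySubgroup R N I ≤ elementarySubgroup R N ⊤ :=
  elementary_mono le_top

lemma elementary_le_relative :
    elementarySubgroup R N I ≤ relativeElementarySubgroup R N I := by
  rw [elementarySubgroup, Subgroup.closure_le]
  intro g hg
  exact Subgroup.subset_closure ⟨g, Subgroup.subset_closure hg, 1, one_mem _, by group⟩

lemma relative_le_elementary_top :
    relativeElementarySubgroup R N I ≤ elementarySubgroup R N ⊤ := by
  rw [relativeElementarySubgroup, Subgroup.closure_le]
  rintro g ⟨e, he, u, hu, rfl⟩
  exact mul_mem (mul_mem hu (elementary_le_top he)) (inv_mem hu)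

lemma conj_mem_relative {u x : GL (Fin N) R} (hu : u ∈ elementarySubgroup R N ⊤)
    (hx : x ∈ relativeElementarySubgroup R N I) :
    u * x * u⁻¹ ∈ relativeElementarySubgroup R N I := by
  induction hx using Subgroup.closure_induction with
  | mem x hxS =>
    obtain ⟨e, he, w, hw, rfl⟩ := hxS
    exact Subgroup.subset_closure ⟨e, he, u * w, mul_mem hu hw, by group⟩
  | one => simpa using one_mem _
  | mul x y hx hy ihx ihy =>
    have hxy : u * (x * y) * u⁻¹ = (u * x * u⁻¹) * (u * y * u⁻¹) := by group
    rw [hxy]; exact mul_mem ihx ihy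
  | inv x hx ihx =>
    have hxi : u * x⁻¹ * u⁻¹ = (u * x * u⁻¹)⁻¹ := by group
    rw [hxi]; exact inv_mem ihx

lemma conj_mem_commutator {u x : GL (Fin N) R} (hu : u ∈ elementarySubgroup R N ⊤)
    (hx : x ∈ ⁅relativeElementarySubgroup R N A, relativeElementarySubgroup R N B⁆) :
    u * x * u⁻¹ ∈ ⁅relativeElementarySubgroup R N A, relativeElementarySubgroup R N B⁆ := by
  rw [Subgroup.commutator_def] at hx
  induction hx using Subgroup.closure_induction with
  | mem x hxS =>
    obtain ⟨p, hp, q, hq, rfl⟩ := hxS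
    rw [conjugate_commutatorElement]
    exact Subgroup.commutator_mem_commutator (conj_mem_relative hu hp) (conj_mem_relative hu hq)
  | one => simpa using one_mem _
  | mul x y hx hy ihx ihy =>
    have hxy : u * (x * y) * u⁻¹ = (u * x * u⁻¹) * (u * y * u⁻¹) := by group
    rw [hxy]; exact mul_mem ihx ihy
  | inv x hx ihx =>
    have hxi : u * x⁻¹ * u⁻¹ = (u * x * u⁻¹)⁻¹ := by group
    rw [hxi]; exact inv_mem ihx

lemma sum_dotProduct' {ι : Type*} (s : Finset ι) (z : ι → Fin N → R) (u : Fin N → R) :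
    (∑ p ∈ s, z p) ⬝ᵥ u = ∑ p ∈ s, z p ⬝ᵥ u := by
  simp only [dotProduct, Finset.sum_apply, Finset.sum_mul]
  exact Finset.sum_comm

lemma dotProduct_sum' {ι : Type*} (s : Finset ι) (z : Fin N → R) (u : ι → Fin N → R) :
    z ⬝ᵥ (∑ p ∈ s, u p) = ∑ p ∈ s, z ⬝ᵥ u p := by
  simp only [dotProduct, Finset.sum_apply, Finset.mul_sum]
  exact Finset.sum_comm

lemma exists_third (hN : 3 ≤ N) (k l : Fin N) : ∃ m : Fin N, m ≠ k ∧ m ≠ l := by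
  have hcard : ({k, l} : Finset (Fin N)).card < (Finset.univ : Finset (Fin N)).card := by
    have h2 : ({k, l} : Finset (Fin N)).card ≤ 2 := Finset.card_le_two
    have h3 : (3 : ℕ) ≤ (Finset.univ : Finset (Fin N)).card := by
      rw [Finset.card_univ, Fintype.card_fin]; exact hN
    omega
  have hns : ¬ ((Finset.univ : Finset (Fin N)) ⊆ ({k, l} : Finset (Fin N))) := by
    intro hsub
    exact absurd (Finset.card_le_card hsub) (not_le.mpr hcard)
  obtain ⟨m, -, hm⟩ := Finset.not_subset.mp hns
  simp only [Finset.mem_insert, Finset.mem_singleton, not_or] at hm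
  exact ⟨m, hm.1, hm.2⟩

/-- Key generator fact: `t_{kl}(a·b) ∈ ⁅relE(A), relE(B)⁆` for `a ∈ A`, `b ∈ B`. -/
lemma transvection_mul_mem_commutator (hN : 3 ≤ N) {k l : Fin N} (hkl : k ≠ l)
    {a b : R} (ha : a ∈ A) (hb : b ∈ B) :
    transvectionGL R N k l hkl (a * b) ∈
      ⁅relativeElementarySubgroup R N A, relativeElementarySubgroup R N B⁆ := by
  obtain ⟨m, hmk, hml⟩ := exists_third hN k l
  rw [← steinberg k l m (Ne.symm hmk) hml hkl a b]
  exact Subgroup.commutator_mem_commutator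
    (elementary_le_relative (transvectionGL_mem_elementary _ ha))
    (elementary_le_relative (transvectionGL_mem_elementary _ hb))

/-! ### Sum decomposition lemmas -/

lemma rk1_sum_mem_left {S : Subgroup (GL (Fin N) R)} (u : Fin N → R) {ι : Type*} [DecidableEq ι]
    (s : Finset ι) (z : ι → Fin N → R) (horth : ∀ p ∈ s, z p ⬝ᵥ u = 0)
    (hmem : ∀ p (hp : p ∈ s), rk1 u (z p) (horth p hp) ∈ S) (hs) :
    rk1 u (∑ p ∈ s, z p) hs ∈ S := by
  induction s using Finset.induction_on with
  | empty =>
    have h1 : rk1 u (∑ p ∈ (∅ : Finset ι), z p) hs = 1 := by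
      ext : 1
      show 1 + vecMulVec u (∑ p ∈ (∅ : Finset ι), z p) = 1
      have hz : vecMulVec u (∑ p ∈ (∅ : Finset ι), z p) = 0 := by
        ext a b; simp [vecMulVec_apply]
      rw [hz, add_zero]
    rw [h1]; exact one_mem _
  | insert a t hnotmem ih =>
    have hza : z a ⬝ᵥ u = 0 := horth a (Finset.mem_insert_self a t)
    have hzt : (∑ p ∈ t, z p) ⬝ᵥ u = 0 := by
      rw [sum_dotProduct']
      exact Finset.sum_eq_zero fun p hp => horth p (Finset.mem_insert_of_mem hp)
    have hsum : (∑ p ∈ insert a t, z p) = z a + ∑ p ∈ t, z p := Finset.sum_insert hnotmem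
    have e1 : rk1 u (∑ p ∈ insert a t, z p) hs =
        rk1 u (z a) hza * rk1 u (∑ p ∈ t, z p) hzt := by
      rw [rk1_mul_left u (z a) _ hza hzt (by rw [← hsum]; exact hs)]
      all_goals try congr 1
      all_goals try exact hsum.symm
    rw [e1]
    exact mul_mem (hmem a (Finset.mem_insert_self a t))
      (ih (fun p hp => horth p (Finset.mem_insert_of_mem hp))
        (fun p hp => hmem p (Finset.mem_insert_of_mem hp)) hzt)

lemma rk1_sum_mem_right {S : Subgroup (GL (Fin N) R)} (z : Fin N → R) {ι : Type*} [DecidableEq ι]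
    (s : Finset ι) (u : ι → Fin N → R) (horth : ∀ p ∈ s, z ⬝ᵥ u p = 0)
    (hmem : ∀ p (hp : p ∈ s), rk1 (u p) z (horth p hp) ∈ S) (hs) :
    rk1 (∑ p ∈ s, u p) z hs ∈ S := by
  induction s using Finset.induction_on with
  | empty =>
    have : rk1 (∑ p ∈ (∅ : Finset ι), u p) z hs = 1 := by
      ext : 1
      show 1 + vecMulVec 0 z = 1
      have : vecMulVec (0 : Fin N → R) z = 0 := by ext a b; simp [vecMulVec_apply]
      rw [this, add_zero]
    rw [this]; exact one_mem _
  | insert a t hnotmem ih =>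
    have hua : z ⬝ᵥ u a = 0 := horth a (Finset.mem_insert_self a t)
    have hut : z ⬝ᵥ (∑ p ∈ t, u p) = 0 := by
      rw [dotProduct_sum']
      exact Finset.sum_eq_zero fun p hp => horth p (Finset.mem_insert_of_mem hp)
    have hsum : (∑ p ∈ insert a t, u p) = u a + ∑ p ∈ t, u p := Finset.sum_insert hnotmem
    have e1 : rk1 (∑ p ∈ insert a t, u p) z hs =
        rk1 (u a) z hua * rk1 (∑ p ∈ t, u p) z hut := by
      rw [rk1_mul_right (u a) _ z hua hut (by rw [← hsum]; exact hs)]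
      all_goals try congr 1
      all_goals try exact hsum.symm
    rw [e1]
    exact mul_mem (hmem a (Finset.mem_insert_self a t))
      (ih (fun p hp => horth p (Finset.mem_insert_of_mem hp))
        (fun p hp => hmem p (Finset.mem_insert_of_mem hp)) hut)

/-! ### Row and column unipotents -/

lemma rk1_single_single (k l : Fin N) (hkl : k ≠ l) (c d : R) (h) :
    rk1 (Pi.single k c) (Pi.single l d) h = transvectionGL R N k l hkl (c * d) := by
  ext : 1
  show 1 + vecMulVec (Pi.single k c) (Pi.single l d) = Matrix.transvection k l (c * d)
  rw [Matrix.transvection]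
  congr 1
  ext a b
  by_cases h1 : a = k
  · subst h1
    by_cases h2 : b = l
    · subst h2
      simp [Matrix.single, vecMulVec_apply]
    · simp [Matrix.single, vecMulVec_apply, h2, Ne.symm h2]
  · simp [Matrix.single, vecMulVec_apply, h1, Ne.symm h1]

/-- Decomposition of a "row" unipotent `1 + (c eₘ) wᵀ`, `w m = 0`, into transvections. -/
lemma row_mem {S : Subgroup (GL (Fin N) R)} (m : Fin N) (c : R) (w : Fin N → R) (hwm : w m = 0)
    (hT : ∀ s : Fin N, (hms : m ≠ s) → transvectionGL R N m s hms (c * w s) ∈ S) (h) :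
    rk1 (Pi.single m c) w h ∈ S := by
  have e : (∑ s ∈ Finset.univ.erase m, Pi.single s (w s)) = w := by
    rw [Finset.sum_erase _ (by simp [hwm])]
    exact Finset.univ_sum_single w
  revert h
  rw [← e]
  intro h
  refine rk1_sum_mem_left (Pi.single m c) (Finset.univ.erase m) _
    (fun s hs => by
      rw [single_dotProduct, Pi.single_apply, if_neg (Finset.ne_of_mem_erase hs), mul_zero]) ?_ h
  intro s hs
  have hsm : s ≠ m := Finset.ne_of_mem_erase hs
  rw [rk1_single_single m s (Ne.symm hsm)]
  exact hT s (Ne.symm hsm)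

/-- Decomposition of a "column" unipotent `1 + w (c eₘ)ᵀ`, `w m = 0`, into transvections. -/
lemma col_mem {S : Subgroup (GL (Fin N) R)} (m : Fin N) (c : R) (w : Fin N → R) (hwm : w m = 0)
    (hT : ∀ s : Fin N, (hsm : s ≠ m) → transvectionGL R N s m hsm (w s * c) ∈ S) (h) :
    rk1 w (Pi.single m c) h ∈ S := by
  have e : (∑ s ∈ Finset.univ.erase m, Pi.single s (w s)) = w := by
    rw [Finset.sum_erase _ (by simp [hwm])]
    exact Finset.univ_sum_single w
  revert h
  rw [← e]
  intro h
  refine rk1_sum_mem_right (Pi.single m c) (Finset.univ.erase m) _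
    (fun s hs => by
      rw [dotProduct_single, Pi.single_apply, if_neg (Finset.ne_of_mem_erase hs), zero_mul]) ?_ h
  intro s hs
  have hsm : s ≠ m := Finset.ne_of_mem_erase hs
  rw [rk1_single_single s m hsm]
  exact hT s hsm

/-! ### The atom lemma -/

/-- A rank-one unipotent `1 + u zᵀ` with `zᵀu = 0`, one coordinate of `z` vanishing, and all
entries of `z` of the form `a·b` with `b ∈ B`, lies in `⁅relE(A), relE(B)⁆`. -/
lemma atom_mem_commutator (hN : 3 ≤ N) {A B : Ideal R} {a : R} (ha : a ∈ A)
    (u z : Fin N → R) (m : Fin N) (hzm : z m = 0) (hz : ∀ s, ∃ b ∈ B, z s = a * b)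
    (horth : z ⬝ᵥ u = 0) :
    rk1 u z horth ∈ ⁅relativeElementarySubgroup R N A, relativeElementarySubgroup R N B⁆ := by
  set w : Fin N → R := u - Pi.single m (u m) with hw
  have hwm : w m = 0 := by simp [hw]
  have h2 : z ⬝ᵥ Pi.single m (u m) = 0 := by
    rw [dotProduct_single, hzm, zero_mul]
  have h1 : z ⬝ᵥ w = 0 := by
    rw [hw, dotProduct_sub, horth, h2, sub_zero]
  -- split:  1 + u zᵀ = (1 + w zᵀ)(1 + (uₘ eₘ) zᵀ)
  have hsplit : rk1 u z horth = rk1 w z h1 * rk1 (Pi.single m (u m)) z h2 := by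
    rw [rk1_mul_right _ _ _ h1 h2 (by rw [hw, sub_add_cancel]; exact horth)]
    ext : 1
    show (1 : Matrix (Fin N) (Fin N) R) + vecMulVec u z
        = 1 + vecMulVec (w + Pi.single m (u m)) z
    rw [hw, sub_add_cancel]
  -- the second factor is a product of transvections with parameters in a·B
  have hsecond : rk1 (Pi.single m (u m)) z h2 ∈
      ⁅relativeElementarySubgroup R N A, relativeElementarySubgroup R N B⁆ := by
    refine row_mem m (u m) z hzm (fun s hms => ?_) h2
    obtain ⟨b, hb, hzs⟩ := hz s
    rw [hzs, show u m * (a * b) = a * (u m * b) by ring]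
    exact transvection_mul_mem_commutator hN hms ha (Ideal.mul_mem_left B (u m) hb)
  -- the first factor is a commutator ⁅gX, gY⁆ with gX ∈ E(⊤), gY ∈ T
  have hgx : Pi.single m (1 : R) ⬝ᵥ w = 0 := by
    rw [single_dotProduct, hwm, mul_zero]
  have hgy : z ⬝ᵥ Pi.single m (1 : R) = 0 := by
    rw [dotProduct_single, hzm, zero_mul]
  set gX := rk1 w (Pi.single m 1) hgx with hgX
  set gY := rk1 (Pi.single m 1) z hgy with hgY
  have hXX : vecMulVec w (Pi.single m (1:R)) * vecMulVec w (Pi.single m 1) = 0 := by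
    rw [vecMulVec_mul_vecMulVec, single_dotProduct, hwm, mul_zero, zero_smul]
  have hYY : vecMulVec (Pi.single m (1:R)) z * vecMulVec (Pi.single m 1) z = 0 := by
    rw [vecMulVec_mul_vecMulVec, dotProduct_single, hzm, zero_mul, zero_smul]
  have hYX : vecMulVec (Pi.single m (1:R)) z * vecMulVec w (Pi.single m 1) = 0 := by
    rw [vecMulVec_mul_vecMulVec, h1, zero_smul]
  have hcomm : ⁅gX, gY⁆ = rk1 w z h1 := by
    have h3 := unipUnit_commutator (vecMulVec w (Pi.single m 1)) (vecMulVec (Pi.single m 1) z)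
      hXX hYY hYX
    have e1 : gX = unipUnit (vecMulVec w (Pi.single m 1)) (by
        rw [vecMulVec_mul_vecMulVec, hgx, zero_smul]) := rfl
    have e2 : gY = unipUnit (vecMulVec (Pi.single m 1) z) (by
        rw [vecMulVec_mul_vecMulVec, hgy, zero_smul]) := rfl
    rw [e1, e2, h3]
    ext : 1
    show 1 + vecMulVec w (Pi.single m 1) * vecMulVec (Pi.single m 1) z = 1 + vecMulVec w z
    rw [vecMulVec_mul_vecMulVec, single_dotProduct, Pi.single_eq_same, mul_one, one_smul]
  have hgYT : gY ∈ ⁅relativeElementarySubgroup R N A, relativeElementarySubgroup R N B⁆ := by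
    refine row_mem m 1 z hzm (fun s hms => ?_) hgy
    obtain ⟨b, hb, hzs⟩ := hz s
    rw [hzs, show (1 : R) * (a * b) = a * b by ring]
    exact transvection_mul_mem_commutator hN hms ha hb
  have hgXE : gX ∈ elementarySubgroup R N (⊤ : Ideal R) := by
    refine col_mem m 1 w hwm (fun s hsm => ?_) hgx
    exact transvectionGL_mem_elementary hsm trivial
  rw [hsplit, ← hcomm, commutatorElement_def]
  exact mul_mem (mul_mem (conj_mem_commutator hgXE hgYT) (inv_mem hgYT)) hsecond

/-! ### The rest lemma: rank-one unipotents with all parameters in `a·B` -/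

lemma rest_mem_commutator (hN : 3 ≤ N) {A B : Ideal R} {a : R} (ha : a ∈ A)
    (u θ ρ : Fin N → R) (hθ : θ ⬝ᵥ u = 1) (hρu : ρ ⬝ᵥ u = 0)
    (hρ : ∀ s, ∃ b ∈ B, ρ s = a * b) :
    rk1 u ρ hρu ∈ ⁅relativeElementarySubgroup R N A, relativeElementarySubgroup R N B⁆ := by
  set M : Fin N × Fin N → R := fun p => ρ p.1 * θ p.2 - θ p.1 * ρ p.2 with hM
  set ζ : Fin N × Fin N → Fin N → R := fun p =>
    M p • (u p.2 • (Pi.single p.1 (1 : R) : Fin N → R)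
      - u p.1 • (Pi.single p.2 (1 : R) : Fin N → R)) with hζ
  set y : Fin N × Fin N → Fin N → R := fun p =>
    (M p * u p.2) • (Pi.single p.1 (1 : R) : Fin N → R) with hy
  have hMswap : ∀ p : Fin N × Fin N, M p.swap = - M p := by
    intro p; simp only [hM, Prod.fst_swap, Prod.snd_swap]; ring
  have hMdiag : ∀ k : Fin N, M (k, k) = 0 := by
    intro k; simp only [hM]; ring
  have hytotal : (∑ p : Fin N × Fin N, y p) = ρ := by
    funext s
    simp only [hy, Finset.sum_apply, Pi.smul_apply, Pi.single_apply, smul_eq_mul, mul_ite,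
      mul_one, mul_zero, Fintype.sum_prod_type]
    rw [Finset.sum_comm]
    simp only [Finset.sum_ite_eq, Finset.mem_univ, if_true]
    have e1 : ∑ l : Fin N, M (s, l) * u l = ρ s * (θ ⬝ᵥ u) - θ s * (ρ ⬝ᵥ u) := by
      rw [dotProduct, dotProduct, Finset.mul_sum, Finset.mul_sum, ← Finset.sum_sub_distrib]
      exact Finset.sum_congr rfl fun l _ => by simp only [hM]; ring
    rw [e1, hθ, hρu, mul_one, mul_zero, sub_zero]
  have hζy : ∀ p : Fin N × Fin N, ζ p = y p + y p.swap := by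
    intro p
    funext s
    have := hMswap p
    simp only [hζ, hy, Pi.add_apply, Pi.smul_apply, Pi.sub_apply, smul_eq_mul,
      Prod.fst_swap, Prod.snd_swap, this]
    ring
  have hswapsum :
      (∑ p ∈ Finset.univ.filter (fun p : Fin N × Fin N => p.1 < p.2), y p.swap)
        = ∑ p ∈ Finset.univ.filter (fun p : Fin N × Fin N => p.2 < p.1), y p := by
    refine Finset.sum_bij' (fun p _ => Prod.swap p) (fun p _ => Prod.swap p) ?_ ?_ ?_ ?_ ?_
    · intro p hp
      simp only [Finset.mem_filter, Finset.mem_univ, true_and] at hp ⊢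
      simpa using hp
    · intro p hp
      simp only [Finset.mem_filter, Finset.mem_univ, true_and] at hp ⊢
      simpa using hp
    · intro p _; exact Prod.swap_swap p
    · intro p _; exact Prod.swap_swap p
    · intro p _; rfl
  have hgtsum :
      (∑ p ∈ Finset.univ.filter (fun p : Fin N × Fin N => p.2 < p.1), y p)
        = ∑ p ∈ Finset.univ.filter (fun p : Fin N × Fin N => ¬ p.1 < p.2), y p := by
    refine Finset.sum_subset ?_ ?_
    · intro p hp
      simp only [Finset.mem_filter, Finset.mem_univ, true_and] at hp ⊢
      exact not_lt_of_gt hp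
    · intro p hp hnp
      simp only [Finset.mem_filter, Finset.mem_univ, true_and] at hp hnp
      have : p.1 = p.2 := le_antisymm (not_lt.mp hnp) (not_lt.mp hp)
      have hp0 : p = (p.1, p.1) := by
        rw [Prod.ext_iff]; exact ⟨rfl, this.symm⟩
      rw [hy]
      simp only
      rw [hp0, hMdiag]
      funext s
      simp
  have hsum : (∑ p ∈ Finset.univ.filter (fun p : Fin N × Fin N => p.1 < p.2), ζ p) = ρ := by
    calc (∑ p ∈ Finset.univ.filter (fun p : Fin N × Fin N => p.1 < p.2), ζ p)
        = (∑ p ∈ Finset.univ.filter (fun p : Fin N × Fin N => p.1 < p.2), (y p + y p.swap)) :=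
          Finset.sum_congr rfl fun p _ => hζy p
      _ = (∑ p ∈ Finset.univ.filter (fun p : Fin N × Fin N => p.1 < p.2), y p)
          + ∑ p ∈ Finset.univ.filter (fun p : Fin N × Fin N => p.1 < p.2), y p.swap :=
          Finset.sum_add_distrib
      _ = (∑ p ∈ Finset.univ.filter (fun p : Fin N × Fin N => p.1 < p.2), y p)
          + ∑ p ∈ Finset.univ.filter (fun p : Fin N × Fin N => ¬ p.1 < p.2), y p := by
          rw [hswapsum, hgtsum]
      _ = ∑ p : Fin N × Fin N, y p := Finset.sum_filter_add_sum_filter_not _ _ _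
      _ = ρ := hytotal
  have horthζ : ∀ p ∈ Finset.univ.filter (fun p : Fin N × Fin N => p.1 < p.2), ζ p ⬝ᵥ u = 0 := by
    intro p _
    simp only [hζ, smul_dotProduct, sub_dotProduct, single_dotProduct, smul_eq_mul]
    ring
  revert hρu
  rw [← hsum]
  intro hρu
  refine rk1_sum_mem_left u _ ζ horthζ (fun p hp => ?_) hρu
  have hplt : p.1 < p.2 := by
    simpa using (Finset.mem_filter.mp hp).2
  obtain ⟨m, hm1, hm2⟩ := exists_third hN p.1 p.2
  refine atom_mem_commutator hN ha u (ζ p) m ?_ ?_ _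
  · simp only [hζ, Pi.smul_apply, Pi.sub_apply, Pi.single_apply, smul_eq_mul,
      if_neg hm1, if_neg hm2]
    ring
  · intro s
    obtain ⟨b1, hb1, e1⟩ := hρ p.1
    obtain ⟨b2, hb2, e2⟩ := hρ p.2
    refine ⟨(b1 * θ p.2 - θ p.1 * b2) *
      (u p.2 * (Pi.single p.1 (1 : R) : Fin N → R) s
        - u p.1 * (Pi.single p.2 (1 : R) : Fin N → R) s), ?_, ?_⟩
    · exact Ideal.mul_mem_right _ _
        (sub_mem (Ideal.mul_mem_right _ _ hb1) (Ideal.mul_mem_left _ _ hb2))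
    · simp only [hζ, hM, Pi.smul_apply, Pi.sub_apply, smul_eq_mul, e1, e2]
      ring

/-! ### Congruence subgroup entries and helpers -/

lemma congruence_entry {B : Ideal R} {g : GL (Fin N) R} (hg : g ∈ congruenceSubgroup R N B)
    (k l : Fin N) : (g : Matrix (Fin N) (Fin N) R) k l - (1 : Matrix (Fin N) (Fin N) R) k l ∈ B := by
  have h0 : (Units.map ((Ideal.Quotient.mk B).mapMatrix.toMonoidHom :
      Matrix (Fin N) (Fin N) R →* Matrix (Fin N) (Fin N) (R ⧸ B))) g = 1 := hg
  have h1 : ((Ideal.Quotient.mk B).mapMatrix (g : Matrix (Fin N) (Fin N) R)) = 1 :=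
    congrArg Units.val h0
  have h2 : Ideal.Quotient.mk B ((g : Matrix (Fin N) (Fin N) R) k l)
      = Ideal.Quotient.mk B ((1 : Matrix (Fin N) (Fin N) R) k l) := by
    have h3 := congrFun (congrFun (congrArg (fun M => (M : Matrix (Fin N) (Fin N) (R ⧸ B))) h1) k) l
    simp only [RingHom.mapMatrix_apply, Matrix.map_apply] at h3
    rw [h3]
    by_cases hkl : k = l
    · subst hkl; simp [Matrix.one_apply]
    · simp [Matrix.one_apply, hkl]
  exact Ideal.Quotient.eq.mp h2

lemma comm_mem_of_mem {A B : Ideal R} {u x : GL (Fin N) R}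
    (hu : u ∈ elementarySubgroup R N ⊤)
    (hx : x ∈ ⁅relativeElementarySubgroup R N A, relativeElementarySubgroup R N B⁆) :
    ⁅u, x⁆ ∈ ⁅relativeElementarySubgroup R N A, relativeElementarySubgroup R N B⁆ := by
  rw [commutatorElement_def]
  exact mul_mem (conj_mem_commutator hu hx) (inv_mem hx)

lemma comm_mem_symm {A B : Ideal R} {x y : GL (Fin N) R}
    (hx : x ∈ relativeElementarySubgroup R N B) (hy : y ∈ relativeElementarySubgroup R N A) :
    ⁅x, y⁆ ∈ ⁅relativeElementarySubgroup R N A, relativeElementarySubgroup R N B⁆ := by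
  have : ⁅x, y⁆ = ⁅y, x⁆⁻¹ := (commutatorElement_inv y x).symm
  rw [this]
  exact inv_mem (Subgroup.commutator_mem_commutator hy hx)

lemma mul_mem_of_conj {A B : Ideal R} {α τ z : GL (Fin N) R}
    (hα : α ∈ elementarySubgroup R N ⊤)
    (hτ : τ ∈ ⁅relativeElementarySubgroup R N A, relativeElementarySubgroup R N B⁆)
    (h : α * z ∈ ⁅relativeElementarySubgroup R N A, relativeElementarySubgroup R N B⁆) :
    α * (τ * z) ∈ ⁅relativeElementarySubgroup R N A, relativeElementarySubgroup R N B⁆ := by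
  have e : α * (τ * z) = (α * τ * α⁻¹) * (α * z) := by group
  rw [e]
  exact mul_mem (conj_mem_commutator hα hτ) h

lemma transvectionGL_inv (i j : Fin N) (hij : i ≠ j) (c : R) :
    (transvectionGL R N i j hij c)⁻¹ = transvectionGL R N i j hij (-c) := by
  ext : 1
  rfl

lemma mul_vecMulVec_mul (H H' : Matrix (Fin N) (Fin N) R) (s t : Fin N → R) :
    H * vecMulVec s t * H' = vecMulVec (H *ᵥ s) (t ᵥ* H') := by
  ext k l
  simp only [Matrix.mul_apply, vecMulVec_apply, Matrix.mulVec, Matrix.vecMul, dotProduct,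
    Finset.sum_mul, Finset.mul_sum]
  exact Finset.sum_congr rfl fun q _ => Finset.sum_congr rfl fun p _ => by ring

lemma stdBasisMatrix_eq_vecMulVec (i j : Fin N) (c : R) :
    Matrix.single i j c = vecMulVec (Pi.single i 1) (Pi.single j c) := by
  ext a b
  by_cases h1 : a = i
  · subst h1
    by_cases h2 : b = j
    · subst h2; simp [Matrix.single, vecMulVec_apply]
    · simp [Matrix.single, vecMulVec_apply, h2, Ne.symm h2]
  · simp [Matrix.single, vecMulVec_apply, h1, Ne.symm h1]

/-- Conjugating a standard basis matrix: `g (c e_{ij}) g⁻¹ = (col i of g)(c · row j of g⁻¹)ᵀ`. -/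
lemma conj_stdBasisMatrix (g : GL (Fin N) R) (i j : Fin N) (c : R) :
    (g : Matrix (Fin N) (Fin N) R) * Matrix.single i j c
        * (↑g⁻¹ : Matrix (Fin N) (Fin N) R)
      = vecMulVec (fun k => (g : Matrix (Fin N) (Fin N) R) k i)
          (fun l => c * (↑g⁻¹ : Matrix (Fin N) (Fin N) R) j l) := by
  rw [stdBasisMatrix_eq_vecMulVec, mul_vecMulVec_mul]
  have e1 : ((g : Matrix (Fin N) (Fin N) R) *ᵥ Pi.single i 1)
      = fun k => (g : Matrix (Fin N) (Fin N) R) k i := by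
    funext k; simp [Matrix.mulVec, dotProduct_single]
  have e2 : (Pi.single j c ᵥ* (↑g⁻¹ : Matrix (Fin N) (Fin N) R))
      = fun l => c * (↑g⁻¹ : Matrix (Fin N) (Fin N) R) j l := by
    funext l; simp [Matrix.vecMul, single_dotProduct]
  rw [e1, e2]

/-! ### The crux: `⁅t_{ij}(a), g⁆ ∈ ⁅relE(A), relE(B)⁆` for `g` congruent to `1` mod `B` -/

lemma crux (hN : 3 ≤ N) {A B : Ideal R} {i j : Fin N} (hij : i ≠ j) {a : R} (ha : a ∈ A)
    {g : GL (Fin N) R} (hg : g ∈ congruenceSubgroup R N B) :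
    ⁅transvectionGL R N i j hij a, g⁆
      ∈ ⁅relativeElementarySubgroup R N A, relativeElementarySubgroup R N B⁆ := by
  obtain ⟨m, hmi, hmj⟩ := exists_third hN i j
  have him : i ≠ m := Ne.symm hmi
  set α := transvectionGL R N i j hij a with hα
  set u : Fin N → R := fun k => (g : Matrix (Fin N) (Fin N) R) k i with hu
  set v : Fin N → R := fun l => (↑g⁻¹ : Matrix (Fin N) (Fin N) R) j l with hv
  set θ : Fin N → R := fun l => (↑g⁻¹ : Matrix (Fin N) (Fin N) R) i l with hθdef
  -- product identities
  have hinv : (↑g⁻¹ : Matrix (Fin N) (Fin N) R) * (g : Matrix (Fin N) (Fin N) R) = 1 := by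
    rw [← Units.val_mul, inv_mul_cancel, Units.val_one]
  have hvu : v ⬝ᵥ u = 0 := by
    have h1 := congrFun (congrFun hinv j) i
    rw [Matrix.mul_apply, Matrix.one_apply_ne (Ne.symm hij)] at h1
    simpa [dotProduct, hu, hv] using h1
  have hθu : θ ⬝ᵥ u = 1 := by
    have h1 := congrFun (congrFun hinv i) i
    rw [Matrix.mul_apply, Matrix.one_apply_eq] at h1
    simpa [dotProduct, hu, hθdef] using h1
  -- congruence facts
  have huB : ∀ k, k ≠ i → u k ∈ B := by
    intro k hk
    have h1 := congruence_entry hg k i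
    rwa [Matrix.one_apply_ne hk, sub_zero] at h1
  have huiB : u i - 1 ∈ B := by
    have h1 := congruence_entry hg i i
    rwa [Matrix.one_apply_eq] at h1
  have hvB : ∀ l, l ≠ j → v l ∈ B := by
    intro l hl
    have h1 := congruence_entry (inv_mem hg) j l
    rwa [Matrix.one_apply_ne (Ne.symm hl), sub_zero] at h1
  have hvjB : v j - 1 ∈ B := by
    have h1 := congruence_entry (inv_mem hg) j j
    rwa [Matrix.one_apply_eq] at h1
  have hθB : ∀ l, l ≠ i → θ l ∈ B := by
    intro l hl
    have h1 := congruence_entry (inv_mem hg) i l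
    rwa [Matrix.one_apply_ne (Ne.symm hl), sub_zero] at h1
  have hθiB : θ i - 1 ∈ B := by
    have h1 := congruence_entry (inv_mem hg) i i
    rwa [Matrix.one_apply_eq] at h1
  -- the conjugate D = g α⁻¹ g⁻¹ as a rank-one unipotent
  have horthav : (fun s => -a * v s) ⬝ᵥ u = 0 := by
    have h1 : (fun s => -a * v s) ⬝ᵥ u = -a * (v ⬝ᵥ u) := by
      rw [dotProduct, dotProduct, Finset.mul_sum]
      exact Finset.sum_congr rfl fun s _ => by ring
    rw [h1, hvu, mul_zero]
  have hD : g * α⁻¹ * g⁻¹ = rk1 u (fun s => -a * v s) horthav := by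
    ext : 1
    simp only [Units.val_mul, rk1_val]
    have hαinv : ((α⁻¹ : GL (Fin N) R) : Matrix (Fin N) (Fin N) R)
        = 1 + Matrix.single i j (-a) := by
      rw [hα, transvectionGL_inv]; rfl
    have hval : (g : Matrix (Fin N) (Fin N) R) * (↑g⁻¹ : Matrix (Fin N) (Fin N) R) = 1 := by
      rw [← Units.val_mul, mul_inv_cancel, Units.val_one]
    rw [hαinv, mul_add, mul_one, add_mul, hval, conj_stdBasisMatrix g i j (-a)]
  -- exceptional and rest parts
  set M0 : R := v i * θ j - θ i * v j with hM0
  set c : R := -(a * M0) with hc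
  set SV : Fin N → R := (Pi.single i (c * u j) : Fin N → R)
    + (Pi.single j (-(c * u i)) : Fin N → R) with hSV
  set bb : Fin N → R := fun s => -(v s) + (Pi.single i (M0 * u j) : Fin N → R) s
    - (Pi.single j (M0 * u i) : Fin N → R) s with hbb
  have hfeq : (fun s => -a * v s) = SV + fun s => a * bb s := by
    funext s
    simp only [hSV, hbb, hc, Pi.add_apply, Pi.single_apply]
    split_ifs <;> ring
  have hSVu : SV ⬝ᵥ u = 0 := by
    rw [hSV, add_dotProduct, single_dotProduct, single_dotProduct]
    ring
  have habbu : (fun s => a * bb s) ⬝ᵥ u = 0 := by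
    have h1 : SV ⬝ᵥ u + (fun s => a * bb s) ⬝ᵥ u = 0 := by
      rw [← add_dotProduct, ← hfeq, horthav]
    rw [hSVu, zero_add] at h1
    exact h1
  have hbbB : ∀ s, bb s ∈ B := by
    intro s
    by_cases hsi : s = i
    · subst hsi
      have e1 : bb s = -(v s) + M0 * u j := by
        simp [hbb, Pi.single_apply, hij]
      rw [e1]
      exact add_mem (neg_mem (hvB s hij)) (Ideal.mul_mem_left _ _ (huB j (Ne.symm hij)))
    · by_cases hsj : s = j
      · subst hsj
        have e1 : bb s = -(v s) - M0 * u i := by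
          simp [hbb, Pi.single_apply, Ne.symm hij]
        have h1 : θ i * u i - 1 ∈ B := by
          have e : θ i * u i - 1 = (θ i - 1) * u i + (u i - 1) := by ring
          rw [e]
          exact add_mem (Ideal.mul_mem_right _ _ hθiB) huiB
        have e2 : -(v s) - M0 * u i = v s * (θ i * u i - 1) - v i * (θ s * u i) := by
          rw [hM0]; ring
        rw [e1, e2]
        exact sub_mem (Ideal.mul_mem_left _ _ h1) (Ideal.mul_mem_right _ _ (hvB i hij))
      · have e1 : bb s = -(v s) := by
          simp [hbb, Pi.single_apply, hsi, hsj]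
        rw [e1]
        exact neg_mem (hvB s hsj)
  -- split D into the exceptional atom and the rest
  have hDsplit : rk1 u (fun s => -a * v s) horthav
      = rk1 u SV hSVu * rk1 u (fun s => a * bb s) habbu := by
    rw [rk1_mul_left u SV _ hSVu habbu (by rw [← hfeq]; exact horthav)]
    ext : 1
    simp only [rk1_val]
    rw [hfeq]
  have hrest : rk1 u (fun s => a * bb s) habbu
      ∈ ⁅relativeElementarySubgroup R N A, relativeElementarySubgroup R N B⁆ :=
    rest_mem_commutator hN ha u θ _ hθu habbu (fun s => ⟨bb s, hbbB s, rfl⟩)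
  -- reduce to the exceptional atom
  have hSVm : SV m = 0 := by simp [hSV, Pi.single_apply, hmi, hmj]
  set w : Fin N → R := u - Pi.single m (u m) with hw
  have hwm : w m = 0 := by simp [hw]
  have hSVsm : SV ⬝ᵥ (Pi.single m (u m) : Fin N → R) = 0 := by
    rw [dotProduct_single, hSVm, zero_mul]
  have hSVw : SV ⬝ᵥ w = 0 := by
    rw [hw, dotProduct_sub, hSVu, hSVsm, sub_zero]
  have hsplit2 : rk1 u SV hSVu = rk1 w SV hSVw * rk1 (Pi.single m (u m)) SV hSVsm := by
    rw [rk1_mul_right _ _ _ hSVw hSVsm (by rw [hw, sub_add_cancel]; exact hSVu)]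
    ext : 1
    simp only [rk1_val]
    rw [hw, sub_add_cancel]
  have hF2 : rk1 (Pi.single m (u m)) SV hSVsm
      ∈ ⁅relativeElementarySubgroup R N A, relativeElementarySubgroup R N B⁆ := by
    refine row_mem m (u m) SV hSVm (fun s hms => ?_) hSVsm
    have humB : u m ∈ B := huB m hmi
    have e : u m * SV s = a * ((-(M0 * u j) * (Pi.single i (1:R) : Fin N → R) s
        + (M0 * u i) * (Pi.single j (1:R) : Fin N → R) s) * u m) := by
      simp only [hSV, hc, Pi.add_apply, Pi.single_apply]
      split_ifs <;> ring
    rw [e]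
    exact transvection_mul_mem_commutator hN hms ha (Ideal.mul_mem_left _ _ humB)
  -- F1 = ⁅gX, gY⁆
  have hgxo : (Pi.single m (1:R) : Fin N → R) ⬝ᵥ w = 0 := by
    rw [single_dotProduct, hwm, mul_zero]
  have hgyo : SV ⬝ᵥ (Pi.single m (1:R) : Fin N → R) = 0 := by
    rw [dotProduct_single, hSVm, zero_mul]
  set gX := rk1 w (Pi.single m 1) hgxo with hgXdef
  set gY := rk1 (Pi.single m 1) SV hgyo with hgYdef
  have hXX : vecMulVec w (Pi.single m (1:R)) * vecMulVec w (Pi.single m 1) = 0 := by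
    rw [vecMulVec_mul_vecMulVec, single_dotProduct, hwm, mul_zero, zero_smul]
  have hYY : vecMulVec (Pi.single m (1:R)) SV * vecMulVec (Pi.single m 1) SV = 0 := by
    rw [vecMulVec_mul_vecMulVec, dotProduct_single, hSVm, zero_mul, zero_smul]
  have hYX : vecMulVec (Pi.single m (1:R)) SV * vecMulVec w (Pi.single m 1) = 0 := by
    rw [vecMulVec_mul_vecMulVec, hSVw, zero_smul]
  have hcommXY : ⁅gX, gY⁆ = rk1 w SV hSVw := by
    have h3 := unipUnit_commutator (vecMulVec w (Pi.single m 1))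
      (vecMulVec (Pi.single m 1) SV) hXX hYY hYX
    have e1 : gX = unipUnit (vecMulVec w (Pi.single m 1))
        (by rw [vecMulVec_mul_vecMulVec, hgxo, zero_smul]) := rfl
    have e2 : gY = unipUnit (vecMulVec (Pi.single m 1) SV)
        (by rw [vecMulVec_mul_vecMulVec, hgyo, zero_smul]) := rfl
    rw [e1, e2, h3]
    ext : 1
    show 1 + vecMulVec w (Pi.single m 1) * vecMulVec (Pi.single m 1) SV = 1 + vecMulVec w SV
    rw [vecMulVec_mul_vecMulVec, single_dotProduct, Pi.single_eq_same, mul_one, one_smul]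
  have hgXE : gX ∈ elementarySubgroup R N ⊤ := by
    refine col_mem m 1 w hwm (fun s hsm => ?_) hgxo
    exact transvectionGL_mem_elementary hsm trivial
  -- gX = p * q
  set w' : Fin N → R := w - Pi.single i (w i) with hw'
  have hw'm : w' m = 0 := by simp [hw', hwm, Pi.single_apply, hmi]
  have hw'i : w' i = 0 := by simp [hw']
  have hpo : (Pi.single m (1:R) : Fin N → R) ⬝ᵥ w' = 0 := by
    rw [single_dotProduct, hw'm, mul_zero]
  set p := rk1 w' (Pi.single m 1) hpo with hpdef
  set q := transvectionGL R N i m him (u i) with hqdef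
  have hwi : w i = u i := by simp [hw, Pi.single_apply, him]
  have hq1o : (Pi.single m (1:R) : Fin N → R) ⬝ᵥ (Pi.single i (u i) : Fin N → R) = 0 := by
    rw [single_dotProduct, Pi.single_apply, if_neg hmi, mul_zero]
  have hq1 : rk1 (Pi.single i (u i)) (Pi.single m 1) hq1o = q := by
    rw [rk1_single_single i m him (u i) 1, mul_one]
  have hgXpq : gX = p * q := by
    rw [← hq1, hpdef, rk1_mul_right w' (Pi.single i (u i)) (Pi.single m 1) hpo hq1o (by
      rw [dotProduct_add, hpo, hq1o, add_zero])]
    have e : w' + Pi.single i (u i) = w := by rw [hw', hwi, sub_add_cancel]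
    ext : 1
    simp only [rk1_val, hgXdef]
    rw [e]
  have hpRelB : p ∈ relativeElementarySubgroup R N B := by
    refine col_mem m 1 w' hw'm (fun s hsm => ?_) hpo
    have hmem : w' s * 1 ∈ B := by
      rw [mul_one]
      by_cases hsi2 : s = i
      · subst hsi2; rw [hw'i]; exact zero_mem B
      · have e : w' s = u s := by simp [hw', hw, Pi.single_apply, hsi2, hsm]
        rw [e]; exact huB s hsi2
    exact elementary_le_relative (transvectionGL_mem_elementary hsm hmem)
  have hpE : p ∈ elementarySubgroup R N ⊤ := relative_le_elementary_top hpRelB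
  -- gY = x * (tmj * y')
  set x := transvectionGL R N m i hmi (c * u j) with hxdef
  set tmj := transvectionGL R N m j hmj (-a) with htmjdef
  set y' := transvectionGL R N m j hmj (-(c * u i) + a) with hy'def
  have hgYxyy : gY = x * (tmj * y') := by
    have h1 : tmj * y' = transvectionGL R N m j hmj (-(c * u i)) := by
      rw [htmjdef, hy'def, transvectionGL_mul_same]
      congr 1
      ring
    rw [h1]
    have ho1 : (Pi.single i (c * u j) : Fin N → R) ⬝ᵥ (Pi.single m (1:R) : Fin N → R) = 0 := by
      rw [single_dotProduct, Pi.single_apply, if_neg him, mul_zero]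
    have ho2 : (Pi.single j (-(c * u i)) : Fin N → R) ⬝ᵥ (Pi.single m (1:R) : Fin N → R) = 0 := by
      rw [single_dotProduct, Pi.single_apply, if_neg (Ne.symm hmj), mul_zero]
    have e1 : rk1 (Pi.single m 1) (Pi.single i (c * u j)) ho1 = x := by
      rw [rk1_single_single m i hmi (1:R) (c * u j), one_mul]
    have e2 : rk1 (Pi.single m 1) (Pi.single j (-(c * u i))) ho2
        = transvectionGL R N m j hmj (-(c * u i)) := by
      rw [rk1_single_single m j hmj (1:R) _, one_mul]
    rw [← e1, ← e2, hgYdef, rk1_mul_left (Pi.single m 1) _ _ ho1 ho2 (by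
      rw [add_dotProduct, ho1, ho2, add_zero])]
  -- memberships
  have hαA : α ∈ relativeElementarySubgroup R N A :=
    elementary_le_relative (transvectionGL_mem_elementary hij ha)
  have hαE : α ∈ elementarySubgroup R N ⊤ := transvectionGL_mem_elementary hij trivial
  have hxRelB : x ∈ relativeElementarySubgroup R N B :=
    elementary_le_relative (transvectionGL_mem_elementary hmi
      (Ideal.mul_mem_left _ _ (huB j (Ne.symm hij))))
  have hxE : x ∈ elementarySubgroup R N ⊤ := transvectionGL_mem_elementary hmi trivial
  have hxT : x ∈ ⁅relativeElementarySubgroup R N A, relativeElementarySubgroup R N B⁆ := by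
    have e : x = transvectionGL R N m i hmi (a * (-M0 * u j)) := by
      rw [hxdef]; congr 1; rw [hc]; ring
    rw [e]
    exact transvection_mul_mem_commutator hN hmi ha
      (Ideal.mul_mem_left _ _ (huB j (Ne.symm hij)))
  have htmjA : tmj ∈ relativeElementarySubgroup R N A :=
    elementary_le_relative (transvectionGL_mem_elementary hmj (neg_mem ha))
  have htmjE : tmj ∈ elementarySubgroup R N ⊤ := transvectionGL_mem_elementary hmj trivial
  have hy'T : y' ∈ ⁅relativeElementarySubgroup R N A, relativeElementarySubgroup R N B⁆ := by
    have hM0u : M0 * u i + 1 ∈ B := by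
      have e : M0 * u i + 1 = -(bb j) - (v j - 1) := by
        simp only [hbb, Pi.single_apply, if_neg (Ne.symm hij), if_pos rfl, if_true]
        ring
      rw [e]
      exact sub_mem (neg_mem (hbbB j)) hvjB
    have e2 : y' = transvectionGL R N m j hmj (a * (M0 * u i + 1)) := by
      rw [hy'def]; congr 1; rw [hc]; ring
    rw [e2]
    exact transvection_mul_mem_commutator hN hmj ha hM0u
  have hτ1 : ⁅gX, x⁆ ∈ ⁅relativeElementarySubgroup R N A, relativeElementarySubgroup R N B⁆ :=
    comm_mem_of_mem hgXE hxT
  have hτ2 : ⁅gX, y'⁆ ∈ ⁅relativeElementarySubgroup R N A, relativeElementarySubgroup R N B⁆ :=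
    comm_mem_of_mem hgXE hy'T
  have hτp : ⁅p, tmj⁆ ∈ ⁅relativeElementarySubgroup R N A, relativeElementarySubgroup R N B⁆ :=
    comm_mem_symm hpRelB htmjA
  have hqt : ⁅q, tmj⁆ = α⁻¹ * transvectionGL R N i j hij (a * (1 - u i)) := by
    rw [hqdef, htmjdef, steinberg i j m him hmj hij (u i) (-a), hα, transvectionGL_inv,
      transvectionGL_mul_same]
    congr 1
    ring
  have hβT : transvectionGL R N i j hij (a * (1 - u i))
      ∈ ⁅relativeElementarySubgroup R N A, relativeElementarySubgroup R N B⁆ := by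
    refine transvection_mul_mem_commutator hN hij ha ?_
    have e : (1 : R) - u i = -(u i - 1) := by ring
    rw [e]; exact neg_mem huiB
  -- assembly
  have hS5 : α * (p * ⁅q, tmj⁆ * p⁻¹)
      ∈ ⁅relativeElementarySubgroup R N A, relativeElementarySubgroup R N B⁆ := by
    rw [hqt]
    have e : α * (p * (α⁻¹ * transvectionGL R N i j hij (a * (1 - u i))) * p⁻¹)
        = ⁅α, p⁆ * (p * transvectionGL R N i j hij (a * (1 - u i)) * p⁻¹) := by
      simp only [commutatorElement_def]; group
    rw [e]
    exact mul_mem (Subgroup.commutator_mem_commutator hαA hpRelB)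
      (conj_mem_commutator hpE hβT)
  have hS4 : α * ⁅gX, tmj⁆
      ∈ ⁅relativeElementarySubgroup R N A, relativeElementarySubgroup R N B⁆ := by
    have hKexp : ⁅gX, tmj⁆ = (p * ⁅q, tmj⁆ * p⁻¹) * ⁅p, tmj⁆ := by
      rw [hgXpq]; simp only [commutatorElement_def]; group
    rw [hKexp, ← mul_assoc]
    exact mul_mem hS5 hτp
  have hS3 : α * (⁅gX, tmj⁆ * (tmj * ⁅gX, y'⁆ * tmj⁻¹))
      ∈ ⁅relativeElementarySubgroup R N A, relativeElementarySubgroup R N B⁆ := by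
    rw [← mul_assoc]
    exact mul_mem hS4 (conj_mem_commutator htmjE hτ2)
  have hS2 : α * (x * (⁅gX, tmj⁆ * (tmj * ⁅gX, y'⁆ * tmj⁻¹)) * x⁻¹)
      ∈ ⁅relativeElementarySubgroup R N A, relativeElementarySubgroup R N B⁆ := by
    have e : α * (x * (⁅gX, tmj⁆ * (tmj * ⁅gX, y'⁆ * tmj⁻¹)) * x⁻¹)
        = ⁅α, x⁆ * (x * (α * (⁅gX, tmj⁆ * (tmj * ⁅gX, y'⁆ * tmj⁻¹))) * x⁻¹) := by
      simp only [commutatorElement_def]; group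
    rw [e]
    exact mul_mem (Subgroup.commutator_mem_commutator hαA hxRelB)
      (conj_mem_commutator hxE hS3)
  have hS1 : α * ⁅gX, gY⁆
      ∈ ⁅relativeElementarySubgroup R N A, relativeElementarySubgroup R N B⁆ := by
    have hexp : ⁅gX, gY⁆ = ⁅gX, x⁆
        * (x * (⁅gX, tmj⁆ * (tmj * ⁅gX, y'⁆ * tmj⁻¹)) * x⁻¹) := by
      rw [hgYxyy]; simp only [commutatorElement_def]; group
    rw [hexp]
    exact mul_mem_of_conj hαE hτ1 hS2
  have hS0 : α * rk1 u SV hSVu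
      ∈ ⁅relativeElementarySubgroup R N A, relativeElementarySubgroup R N B⁆ := by
    rw [hsplit2, ← hcommXY, ← mul_assoc]
    exact mul_mem hS1 hF2
  -- final
  have hfinal : ⁅α, g⁆ = (α * rk1 u SV hSVu) * rk1 u (fun s => a * bb s) habbu := by
    have e : ⁅α, g⁆ = α * (g * α⁻¹ * g⁻¹) := by
      simp only [commutatorElement_def]; group
    rw [e, hD, hDsplit, ← mul_assoc]
  rw [hfinal]
  exact mul_mem hS0 hrest

/-! ### Reduction to generators, and the easy inclusion -/

lemma elementary_le_congruence {B : Ideal R} :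
    elementarySubgroup R N B ≤ congruenceSubgroup R N B := by
  rw [elementarySubgroup, Subgroup.closure_le]
  rintro g ⟨i, j, hij, c, hc, rfl⟩
  show _ ∈ (Units.map _).ker
  rw [MonoidHom.mem_ker]
  ext : 1
  show (Ideal.Quotient.mk B).mapMatrix (Matrix.transvection i j c) = 1
  ext k l
  rw [RingHom.mapMatrix_apply, Matrix.map_apply, Matrix.transvection, Matrix.add_apply, map_add]
  have hc0 : Ideal.Quotient.mk B (Matrix.single i j c k l) = 0 := by
    simp only [Matrix.single, Matrix.of_apply]
    by_cases h1 : i = k ∧ j = l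
    · rw [if_pos h1]
      exact Ideal.Quotient.eq_zero_iff_mem.mpr hc
    · rw [if_neg h1, map_zero]
  rw [hc0, add_zero]
  by_cases hkl : k = l
  · subst hkl; simp [Matrix.one_apply]
  · simp [Matrix.one_apply, hkl]

lemma relative_le_congruence {B : Ideal R} :
    relativeElementarySubgroup R N B ≤ congruenceSubgroup R N B := by
  rw [relativeElementarySubgroup, Subgroup.closure_le]
  rintro g ⟨e, he, w, hw, rfl⟩
  have heC : e ∈ congruenceSubgroup R N B := elementary_le_congruence he
  exact Subgroup.Normal.conj_mem (MonoidHom.normal_ker _) e heC w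

lemma congruence_conj {B : Ideal R} {g w : GL (Fin N) R} (hg : g ∈ congruenceSubgroup R N B) :
    w * g * w⁻¹ ∈ congruenceSubgroup R N B :=
  Subgroup.Normal.conj_mem (MonoidHom.normal_ker _) g hg w

lemma comm_elem_cong (hN : 3 ≤ N) {A B : Ideal R} :
    ∀ e ∈ elementarySubgroup R N A, ∀ g ∈ congruenceSubgroup R N B,
      ⁅e, g⁆ ∈ ⁅relativeElementarySubgroup R N A, relativeElementarySubgroup R N B⁆ := by
  intro e he
  induction he using Subgroup.closure_induction with
  | mem x hx =>
    obtain ⟨i, j, hij, c, hc, rfl⟩ := hx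
    intro g hg
    exact crux hN hij hc hg
  | one =>
    intro g hg
    have e1 : ⁅(1 : GL (Fin N) R), g⁆ = 1 := by simp only [commutatorElement_def]; group
    rw [e1]; exact one_mem _
  | mul x y hx hy ihx ihy =>
    intro g hg
    have e1 : ⁅x * y, g⁆ = x * ⁅y, g⁆ * x⁻¹ * ⁅x, g⁆ := by
      simp only [commutatorElement_def]; group
    rw [e1]
    exact mul_mem (conj_mem_commutator (elementary_le_top hx) (ihy g hg)) (ihx g hg)
  | inv x hx ihx =>
    intro g hg
    have e1 : ⁅x⁻¹, g⁆ = x⁻¹ * ⁅x, g⁆⁻¹ * (x⁻¹)⁻¹ := by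
      simp only [commutatorElement_def, inv_inv]; group
    rw [e1]
    exact conj_mem_commutator (inv_mem (elementary_le_top hx)) (inv_mem (ihx g hg))

lemma comm_rel_cong (hN : 3 ≤ N) {A B : Ideal R} :
    ∀ x ∈ relativeElementarySubgroup R N A, ∀ g ∈ congruenceSubgroup R N B,
      ⁅x, g⁆ ∈ ⁅relativeElementarySubgroup R N A, relativeElementarySubgroup R N B⁆ := by
  intro x hx
  induction hx using Subgroup.closure_induction with
  | mem x hxS =>
    obtain ⟨e, he, w, hw, rfl⟩ := hxS
    intro g hg
    have e1 : ⁅w * e * w⁻¹, g⁆ = w * ⁅e, w⁻¹ * g * (w⁻¹)⁻¹⁆ * w⁻¹ := by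
      simp only [commutatorElement_def, inv_inv]; group
    rw [e1]
    exact conj_mem_commutator hw (comm_elem_cong hN e he _ (congruence_conj hg))
  | one =>
    intro g hg
    have e1 : ⁅(1 : GL (Fin N) R), g⁆ = 1 := by simp only [commutatorElement_def]; group
    rw [e1]; exact one_mem _
  | mul x y hx hy ihx ihy =>
    intro g hg
    have e1 : ⁅x * y, g⁆ = x * ⁅y, g⁆ * x⁻¹ * ⁅x, g⁆ := by
      simp only [commutatorElement_def]; group
    rw [e1]
    exact mul_mem
      (conj_mem_commutator (relative_le_elementary_top hx) (ihy g hg)) (ihx g hg)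
  | inv x hx ihx =>
    intro g hg
    have e1 : ⁅x⁻¹, g⁆ = x⁻¹ * ⁅x, g⁆⁻¹ * (x⁻¹)⁻¹ := by
      simp only [commutatorElement_def, inv_inv]; group
    rw [e1]
    exact conj_mem_commutator (inv_mem (relative_le_elementary_top hx)) (inv_mem (ihx g hg))

end RelComm

/-- Theorem 3A (commutative case): `[E(n,R,A), GL(n,R,B)] = [E(n,R,A), E(n,R,B)]`
for `n ≥ 3`. -/
theorem relative_standard_commutator_formula
    (R : Type*) [CommRing R] (N : ℕ) (hN : 3 ≤ N) (A B : Ideal R) :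
    ⁅relativeElementarySubgroup R N A, congruenceSubgroup R N B⁆ =
      ⁅relativeElementarySubgroup R N A, relativeElementarySubgroup R N B⁆ := by
  apply le_antisymm
  · rw [Subgroup.commutator_le]
    intro x hx g hg
    exact RelComm.comm_rel_cong hN x hx g hg
  · exact Subgroup.commutator_mono le_rfl RelComm.relative_le_congruence
end

section
/- Let R be a commutative ring, n ≥ 3, and I an ideal of R. Then the relative elementary subgroup E(n,R,I) is a normal subgroup of GL(n,R). -/
open Matrix

section SuslinAux

variable {R : Type*} [CommRing R] {N : ℕ}

theorem vmv_mul (v w v' w' : Fin N → R) :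
    vecMulVec v w * vecMulVec v' w' = (w ⬝ᵥ v') • vecMulVec v w' := by
  ext p q
  simp only [mul_apply, vecMulVec_apply, Matrix.smul_apply, smul_eq_mul, dotProduct, Finset.sum_mul]
  exact Finset.sum_congr rfl fun r _ => by ring

theorem vmv_add_right (v w w' : Fin N → R) :
    vecMulVec v (w + w') = vecMulVec v w + vecMulVec v w' := by
  ext p q; simp [vecMulVec_apply, mul_add]

theorem vmv_add_left (v v' w : Fin N → R) :
    vecMulVec (v + v') w = vecMulVec v w + vecMulVec v' w := by
  ext p q; simp [vecMulVec_apply, add_mul]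

theorem vmv_smul_right (b : R) (v w : Fin N → R) :
    b • vecMulVec v w = vecMulVec v (b • w) := by
  ext p q; simp [vecMulVec_apply]; ring

theorem vmv_zero_right (v : Fin N → R) : vecMulVec v (0 : Fin N → R) = 0 := by
  ext p q; simp [vecMulVec_apply]

/-- Membership helper: `M` is the value of an element of `E(n,J)`. -/
def EMat (J : Ideal R) (M : Matrix (Fin N) (Fin N) R) : Prop :=
  ∃ g ∈ elementarySubgroup R N J, g.val = M

theorem EMat.one (J : Ideal R) : EMat J (1 : Matrix (Fin N) (Fin N) R) :=
  ⟨1, one_mem _, rfl⟩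

theorem EMat.mul {J : Ideal R} {M M' : Matrix (Fin N) (Fin N) R}
    (h : EMat J M) (h' : EMat J M') : EMat J (M * M') := by
  obtain ⟨g, hg, rfl⟩ := h; obtain ⟨g', hg', rfl⟩ := h'
  exact ⟨g * g', mul_mem hg hg', rfl⟩

theorem EMat.transvection {J : Ideal R} {i j : Fin N} (hij : i ≠ j) {c : R} (hc : c ∈ J) :
    EMat J (Matrix.transvection i j c) :=
  ⟨transvectionGL R N i j hij c,
    Subgroup.subset_closure ⟨i, j, hij, c, hc, rfl⟩, rfl⟩

/-- L0': row matrices. -/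
theorem emat_row_aux {J : Ideal R} (p : Fin N) (c : Fin N → R) (hc : ∀ q, c q ∈ J)
    (s : Finset (Fin N)) (hp : p ∉ s) :
    EMat J (1 + ∑ q ∈ s, Matrix.single p q (c q)) := by
  classical
  induction s using Finset.induction_on with
  | empty => simpa using EMat.one J
  | @insert a s ha ih =>
    have hpa : p ≠ a := fun h => hp (h ▸ Finset.mem_insert_self a s)
    have hps : p ∉ s := fun h => hp (Finset.mem_insert_of_mem h)
    have key : (1 + Matrix.single p a (c a)) * (1 + ∑ q ∈ s, Matrix.single p q (c q))
        = 1 + ∑ q ∈ insert a s, Matrix.single p q (c q) := by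
      rw [Finset.sum_insert ha]
      have hz : Matrix.single p a (c a) * ∑ q ∈ s, Matrix.single p q (c q) = 0 := by
        rw [Finset.mul_sum]
        refine Finset.sum_eq_zero fun q hq => ?_
        exact Matrix.single_mul_single_of_ne (c := c a) p a p (Ne.symm hpa) (c q)
      rw [mul_add, mul_one, add_mul, one_mul, hz, add_zero]
      abel
    rw [← key]
    exact (EMat.transvection hpa (hc a)).mul (ih hps)

theorem emat_single_row {J : Ideal R} (p : Fin N) (x : R) (w : Fin N → R)
    (hxp : x * w p = 0) (hw : ∀ q, x * w q ∈ J) :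
    EMat J (1 + vecMulVec (Pi.single p x) w) := by
  classical
  have key : vecMulVec (Pi.single p x) w
      = ∑ q ∈ Finset.univ.erase p, Matrix.single p q (x * w q) := by
    ext a b
    rw [Matrix.sum_apply, vecMulVec_apply]
    by_cases hap : a = p
    · by_cases hbp : b = p
      · rw [hap, hbp, Pi.single_eq_same, hxp,
          Finset.sum_eq_zero fun q hq => Matrix.single_apply_of_ne p q _ p p
            (fun hh => (Finset.mem_erase.mp hq).1 (hh.2))]
      · rw [hap, Pi.single_eq_same,
          Finset.sum_eq_single_of_mem b (Finset.mem_erase.mpr ⟨hbp, Finset.mem_univ b⟩)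
            (fun q _ hq => Matrix.single_apply_of_ne p q _ p b
              (fun hh => hq hh.2)),
          Matrix.single_apply_same]
    · rw [Pi.single_eq_of_ne hap, zero_mul,
        Finset.sum_eq_zero fun q hq => Matrix.single_apply_of_ne p q _ a b
          (fun hh => hap hh.1.symm)]
  rw [key]
  exact emat_row_aux p (fun q => x * w q) hw _ (Finset.notMem_erase p _)

theorem emat_one_add_vmv {J : Ideal R} (v w : Fin N → R)
    (hvw : ∀ q, v q * w q = 0) (hw : ∀ q, w q ∈ J) :
    EMat J (1 + vecMulVec v w) := by
  classical
  have aux : ∀ s : Finset (Fin N),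
      EMat J (1 + ∑ p ∈ s, vecMulVec (Pi.single p (v p)) w) := by
    intro s
    induction s using Finset.induction_on with
    | empty => simpa using EMat.one J
    | @insert a s ha ih =>
      have cross : vecMulVec (Pi.single a (v a)) w *
          (∑ p ∈ s, vecMulVec (Pi.single p (v p)) w) = 0 := by
        rw [Finset.mul_sum]
        refine Finset.sum_eq_zero fun p _ => ?_
        rw [vmv_mul, dotProduct_single, mul_comm, hvw p, zero_smul]
      have key : (1 + vecMulVec (Pi.single a (v a)) w) *
          (1 + ∑ p ∈ s, vecMulVec (Pi.single p (v p)) w)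
          = 1 + ∑ p ∈ insert a s, vecMulVec (Pi.single p (v p)) w := by
        rw [Finset.sum_insert ha, mul_add, mul_one, add_mul, one_mul, cross, add_zero]
        abel
      rw [← key]
      refine (emat_single_row a (v a) w (hvw a) (fun q => Ideal.mul_mem_left J _ (hw q))).mul ih
  have total : vecMulVec v w = ∑ p ∈ Finset.univ, vecMulVec (Pi.single p (v p)) w := by
    ext a b
    rw [Matrix.sum_apply]
    simp [vecMulVec_apply, Pi.single_apply, ite_mul, Finset.sum_ite_eq]
  rw [total]
  exact aux _

def RMat (I : Ideal R) (M : Matrix (Fin N) (Fin N) R) : Prop :=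
  ∃ g ∈ relativeElementarySubgroup R N I, g.val = M

theorem RMat.mul {I : Ideal R} {M M' : Matrix (Fin N) (Fin N) R}
    (h : RMat I M) (h' : RMat I M') : RMat I (M * M') := by
  obtain ⟨g, hg, rfl⟩ := h; obtain ⟨g', hg', rfl⟩ := h'
  exact ⟨g * g', mul_mem hg hg', rfl⟩

theorem EMat.rmat {I : Ideal R} {M : Matrix (Fin N) (Fin N) R} (h : EMat I M) : RMat I M := by
  obtain ⟨g, hg, rfl⟩ := h
  exact ⟨g, Subgroup.subset_closure ⟨g, hg, 1, one_mem _, by group⟩, rfl⟩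

theorem comm4 (X Y : Matrix (Fin N) (Fin N) R) (hX : X * X = 0) (hY : Y * Y = 0)
    (hYX : Y * X = 0) : (1 + X) * ((1 + Y) * ((1 - X) * (1 - Y))) = 1 + X * Y := by
  noncomm_ring
  simp [← mul_assoc, hX, hY, hYX]

theorem rmat_suslin {I : Ideal R} (hN : 3 ≤ N) (v : Fin N → R) {b : R} (hb : b ∈ I)
    {i j : Fin N} (hij : i ≠ j) :
    RMat I (1 + vecMulVec v
      (b • (v i • (Pi.single j 1 : Fin N → R) - v j • (Pi.single i 1 : Fin N → R)))) := by
  classical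
  obtain ⟨k, hki, hkj⟩ : ∃ k : Fin N, k ≠ i ∧ k ≠ j := by
    by_contra h
    push_neg at h
    have hsub : (Finset.univ : Finset (Fin N)) ⊆ {i, j} := by
      intro k _
      rcases eq_or_ne k i with rfl | hki
      · simp
      · simp [h k hki]
    have := Finset.card_le_card hsub
    simp only [Finset.card_univ, Fintype.card_fin] at this
    have h2 : ({i, j} : Finset (Fin N)).card ≤ 2 :=
      Finset.card_insert_le i {j} |>.trans (by simp)
    omega
  set r : Fin N → R :=
    v i • (Pi.single j 1 : Fin N → R) - v j • (Pi.single i 1 : Fin N → R) with hr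
  set s : Fin N → R :=
    (Pi.single i (v i) : Fin N → R) + (Pi.single j (v j) : Fin N → R) with hs
  set ub : Fin N → R := v - s with hub
  -- basic coordinate facts
  have hsk : s k = 0 := by
    simp [hs, Pi.single_eq_of_ne hki, Pi.single_eq_of_ne hkj]
  have hrk : r k = 0 := by
    simp [hr, Pi.single_apply, hki.symm, hkj.symm]
  have hrs : r ⬝ᵥ s = 0 := by
    simp [hr, hs, sub_dotProduct, smul_dotProduct, single_dotProduct, dotProduct_add,
      dotProduct_single, Pi.single_apply, hij, hij.symm]
    ring
  -- the matrices X and Y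
  set X : Matrix (Fin N) (Fin N) R := vecMulVec s (b • (Pi.single k 1 : Fin N → R)) with hX
  set Y : Matrix (Fin N) (Fin N) R := vecMulVec (Pi.single k 1 : Fin N → R) r with hY
  have hXX : X * X = 0 := by
    rw [hX, vmv_mul, smul_dotProduct, single_dotProduct, one_mul, hsk, smul_zero, zero_smul]
  have hYY : Y * Y = 0 := by
    rw [hY, vmv_mul, hr, sub_dotProduct, smul_dotProduct, smul_dotProduct,
      dotProduct_single, dotProduct_single]
    simp [Pi.single_apply, hki.symm, hkj.symm]
  have hYX : Y * X = 0 := by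
    rw [hY, hX, vmv_mul, hrs, zero_smul]
  have hXY : X * Y = vecMulVec s (b • r) := by
    rw [hX, hY, vmv_mul, smul_dotProduct, single_dotProduct, one_mul, Pi.single_eq_same,
      smul_eq_mul, mul_one, vmv_smul_right]
  -- E-memberships of the factors
  have hXE : EMat I (1 + X) := by
    refine emat_one_add_vmv s _ (fun q => ?_) (fun q => ?_)
    · rcases eq_or_ne q k with rfl | hqk
      · rw [hsk, zero_mul]
      · simp [Pi.single_eq_of_ne hqk]
    · simp only [Pi.smul_apply, smul_eq_mul]
      exact Ideal.mul_mem_right _ _ hb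
  have hX'E : EMat I (1 - X) := by
    have : (1 : Matrix (Fin N) (Fin N) R) - X
        = 1 + vecMulVec s (-(b • (Pi.single k 1 : Fin N → R))) := by
      rw [sub_eq_add_neg, hX]
      congr 1
      ext p q
      simp [vecMulVec_apply]
      ring
    rw [this]
    refine emat_one_add_vmv s _ (fun q => ?_) (fun q => ?_)
    · rcases eq_or_ne q k with rfl | hqk
      · rw [hsk, zero_mul]
      · simp [Pi.single_eq_of_ne hqk]
    · simp only [Pi.neg_apply, Pi.smul_apply, smul_eq_mul]
      exact neg_mem (Ideal.mul_mem_right _ _ hb)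
  have hYE : EMat (⊤ : Ideal R) (1 + Y) := by
    refine emat_one_add_vmv _ _ (fun q => ?_) (fun q => trivial)
    rcases eq_or_ne q k with rfl | hqk
    · rw [hrk, mul_zero]
    · simp [Pi.single_eq_of_ne hqk]
  obtain ⟨gX, hgX, hgXv⟩ := hXE
  obtain ⟨gX', hgX', hgX'v⟩ := hX'E
  obtain ⟨gY, hgY, hgYv⟩ := hYE
  have hYinv : (gY⁻¹).val = 1 - Y := by
    apply Units.inv_eq_of_mul_eq_one_right
    rw [hgYv, show ((1:Matrix (Fin N) (Fin N) R)+Y)*(1-Y) = 1 - Y*Y by noncomm_ring,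
      hYY, sub_zero]
  -- the commutator element, with value 1 + vecMulVec s (b • r)
  set h2 : GL (Fin N) R := gX * (gY * (gX' * gY⁻¹)) with hh2
  have hh2mem : h2 ∈ relativeElementarySubgroup R N I := by
    refine mul_mem (Subgroup.subset_closure ⟨gX, hgX, 1, one_mem _, by group⟩)
      (Subgroup.subset_closure ⟨gX', hgX', gY, hgY, by group⟩)
  have hh2val : h2.val = 1 + vecMulVec s (b • r) := by
    rw [hh2, Units.val_mul, Units.val_mul, Units.val_mul, hgXv, hgYv, hgX'v, hYinv,
      ← hXY]
    exact comm4 X Y hXX hYY hYX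
  -- the first factor
  have hE1 : EMat I (1 + vecMulVec ub (b • r)) := by
    refine emat_one_add_vmv ub _ (fun q => ?_) (fun q => ?_)
    · rcases eq_or_ne q i with rfl | hqi
      · have : ub q = 0 := by
          simp [hub, hs, Pi.single_eq_same, Pi.single_eq_of_ne hij]
        rw [this, zero_mul]
      · rcases eq_or_ne q j with rfl | hqj
        · have : ub q = 0 := by
            simp [hub, hs, Pi.single_eq_same, Pi.single_eq_of_ne hij.symm]
          rw [this, zero_mul]
        · have : r q = 0 := by
            simp [hr, Pi.single_apply, hqi, hqj]
          simp [this]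
    · simp only [Pi.smul_apply, smul_eq_mul]
      exact Ideal.mul_mem_right _ _ hb
  obtain ⟨g1, hg1, hg1v⟩ := hE1
  refine ⟨g1 * h2, mul_mem (Subgroup.subset_closure ⟨g1, hg1, 1, one_mem _, by group⟩)
    hh2mem, ?_⟩
  rw [Units.val_mul, hg1v, hh2val]
  have cross : vecMulVec ub (b • r) * vecMulVec s (b • r) = 0 := by
    rw [vmv_mul, smul_dotProduct, hrs, smul_zero, zero_smul]
  rw [mul_add, mul_one, add_mul, one_mul, cross, add_zero, add_assoc, ← vmv_add_left,
    hub, sub_add_cancel]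

theorem rmat_sum {I : Ideal R} {ι : Type*} (v : Fin N → R) (c : ι → Fin N → R)
    (horth : ∀ t, c t ⬝ᵥ v = 0) (s : Finset ι)
    (h : ∀ t ∈ s, RMat I (1 + vecMulVec v (c t))) :
    RMat I (1 + vecMulVec v (∑ t ∈ s, c t)) := by
  classical
  induction s using Finset.induction_on with
  | empty => exact ⟨1, one_mem _, by simp [vmv_zero_right]⟩
  | @insert a s ha ih =>
    have cross : vecMulVec v (c a) * vecMulVec v (∑ t ∈ s, c t) = 0 := by
      rw [vmv_mul, horth a, zero_smul]
    have key : (1 + vecMulVec v (c a)) * (1 + vecMulVec v (∑ t ∈ s, c t))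
        = 1 + vecMulVec v (∑ t ∈ insert a s, c t) := by
      rw [Finset.sum_insert ha, vmv_add_right, mul_add, mul_one, add_mul, one_mul,
        cross, add_zero]
      abel
    rw [← key]
    exact (h a (Finset.mem_insert_self a s)).mul
      (ih fun t ht => h t (Finset.mem_insert_of_mem ht))

theorem koszul (v w u : Fin N → R) (hu : u ⬝ᵥ v = 1) (hw : w ⬝ᵥ v = 0) :
    w = ∑ t ∈ (Finset.univ : Finset (Fin N × Fin N)),
      (u t.1 * w t.2) • (v t.1 • (Pi.single t.2 1 : Fin N → R)
        - v t.2 • (Pi.single t.1 1 : Fin N → R)) := by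
  classical
  funext m
  rw [Finset.sum_apply, ← Finset.univ_product_univ, Finset.sum_product]
  simp only [Pi.smul_apply, Pi.sub_apply, Pi.single_apply, smul_eq_mul, mul_sub,
    mul_ite, mul_one, mul_zero, Finset.sum_sub_distrib, Finset.sum_ite_eq,
    Finset.sum_ite_eq', Finset.mem_univ, if_true]
  simp only [dotProduct] at hu hw
  have e1 : ∑ p : Fin N, u p * w m * v p = (∑ p : Fin N, u p * v p) * w m := by
    rw [Finset.sum_mul]; exact Finset.sum_congr rfl fun p _ => by ring
  have e2 : ∑ p : Fin N, u m * w p * v p = u m * ∑ p : Fin N, w p * v p := by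
    rw [Finset.mul_sum]; exact Finset.sum_congr rfl fun p _ => by ring
  have e3 : ∀ x : Fin N, (∑ x1 : Fin N, if m = x then u x * w x1 * v x1 else 0)
      = if m = x then (∑ x1 : Fin N, u x * w x1 * v x1) else 0 := fun x => by
    split <;> simp
  rw [Finset.sum_congr rfl fun x _ => e3 x, Finset.sum_ite_eq, if_pos (Finset.mem_univ m),
    e1, e2, hu, hw, one_mul, mul_zero, sub_zero]

theorem rmat_one_add_vmv {I : Ideal R} (hN : 3 ≤ N) (v w u : Fin N → R)
    (hu : u ⬝ᵥ v = 1) (hw : w ⬝ᵥ v = 0) (hwI : ∀ q, w q ∈ I) :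
    RMat I (1 + vecMulVec v w) := by
  classical
  rw [koszul v w u hu hw]
  refine rmat_sum v _ (fun t => ?_) _ (fun t _ => ?_)
  · rw [smul_dotProduct, sub_dotProduct, smul_dotProduct, smul_dotProduct,
      single_dotProduct, single_dotProduct]
    simp only [one_mul, smul_eq_mul]
    rw [show v t.1 * v t.2 - v t.2 * v t.1 = 0 by ring, mul_zero]
  · rcases eq_or_ne t.1 t.2 with heq | hne
    · refine ⟨1, one_mem _, ?_⟩
      rw [heq, sub_self, smul_zero, vmv_zero_right, add_zero, Units.val_one]
    · exact rmat_suslin hN v (Ideal.mul_mem_left I _ (hwI t.2)) hne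

theorem conj_transvection_mem {I : Ideal R} (hN : 3 ≤ N) (g : GL (Fin N) R) {i j : Fin N}
    (hij : i ≠ j) {c : R} (hc : c ∈ I) :
    g * transvectionGL R N i j hij c * g⁻¹ ∈ relativeElementarySubgroup R N I := by
  classical
  set v : Fin N → R := fun p => g.val p i with hv
  set w : Fin N → R := fun q => c * (g⁻¹).val j q with hwdef
  set u : Fin N → R := fun p => (g⁻¹).val i p with hudef
  have hginv : (g⁻¹).val * g.val = 1 := by
    rw [← Units.val_mul, inv_mul_cancel, Units.val_one]
  have hgvinv : g.val * (g⁻¹).val = 1 := by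
    rw [← Units.val_mul, mul_inv_cancel, Units.val_one]
  have hwv : w ⬝ᵥ v = 0 := by
    have h0 : ((g⁻¹).val * g.val) j i = (0 : R) := by
      rw [hginv, one_apply_ne hij.symm]
    calc w ⬝ᵥ v = c * ((g⁻¹).val * g.val) j i := by
          simp only [dotProduct, hwdef, hv, mul_apply, Finset.mul_sum, mul_assoc]
      _ = 0 := by rw [h0, mul_zero]
  have huv : u ⬝ᵥ v = 1 := by
    have h1 : ((g⁻¹).val * g.val) i i = (1 : R) := by rw [hginv, one_apply_eq]
    simpa only [dotProduct, hudef, hv, mul_apply] using h1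
  have hwI : ∀ q, w q ∈ I := fun q => Ideal.mul_mem_right _ _ hc
  have key : (g * transvectionGL R N i j hij c * g⁻¹).val = 1 + vecMulVec v w := by
    rw [Units.val_mul, Units.val_mul]
    have htv : (transvectionGL R N i j hij c).val = 1 + Matrix.single i j c := rfl
    rw [htv, mul_add, mul_one, add_mul, hgvinv]
    congr 1
    ext p q
    simp only [mul_apply, Matrix.single, of_apply, ite_and, mul_ite, mul_zero, ite_mul,
      zero_mul, Finset.sum_ite_eq, Finset.sum_ite_eq', Finset.mem_univ, if_true,
      vecMulVec_apply, hv, hwdef]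
    ring_nf
  obtain ⟨g', hg', hg'v⟩ := rmat_one_add_vmv hN v w u huv hwv hwI
  have heq : g * transvectionGL R N i j hij c * g⁻¹ = g' := Units.ext (by rw [key, hg'v])
  rw [heq]
  exact hg'

theorem conj_elementary_mem {I : Ideal R} (hN : 3 ≤ N) {e : GL (Fin N) R}
    (he : e ∈ elementarySubgroup R N I) (g : GL (Fin N) R) :
    g * e * g⁻¹ ∈ relativeElementarySubgroup R N I := by
  refine Subgroup.closure_induction
    (p := fun x _ => ∀ g : GL (Fin N) R, g * x * g⁻¹ ∈ relativeElementarySubgroup R N I)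
    ?_ ?_ ?_ ?_ he g
  · rintro x ⟨i, j, hij, c, hc, rfl⟩ g
    exact conj_transvection_mem hN g hij hc
  · intro g
    simpa using one_mem _
  · intro x y hx hy ihx ihy g
    have : g * (x * y) * g⁻¹ = (g * x * g⁻¹) * (g * y * g⁻¹) := by group
    rw [this]
    exact mul_mem (ihx g) (ihy g)
  · intro x hx ih g
    have : g * x⁻¹ * g⁻¹ = (g * x * g⁻¹)⁻¹ := by group
    rw [this]
    exact inv_mem (ih g)

theorem relativeElementarySubgroup_normal'
    (hN : 3 ≤ N) (I : Ideal R) :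
    (relativeElementarySubgroup R N I).Normal := by
  constructor
  intro x hx g
  refine Subgroup.closure_induction
    (p := fun x _ => ∀ g : GL (Fin N) R, g * x * g⁻¹ ∈ relativeElementarySubgroup R N I)
    ?_ ?_ ?_ ?_ hx g
  · rintro x ⟨e, he, u, hu, rfl⟩ g
    have : g * (u * e * u⁻¹) * g⁻¹ = (g * u) * e * (g * u)⁻¹ := by group
    rw [this]
    exact conj_elementary_mem hN he (g * u)
  · intro g
    simpa using one_mem _
  · intro x y hx hy ihx ihy g
    have : g * (x * y) * g⁻¹ = (g * x * g⁻¹) * (g * y * g⁻¹) := by group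
    rw [this]
    exact mul_mem (ihx g) (ihy g)
  · intro x hx ih g
    have : g * x⁻¹ * g⁻¹ = (g * x * g⁻¹)⁻¹ := by group
    rw [this]
    exact inv_mem (ih g)

end SuslinAux

/-- The relative elementary subgroup `E(n,R,I)` is normal in `GL(n,R)` for `n ≥ 3`. -/
theorem relativeElementarySubgroup_normal
    (R : Type*) [CommRing R] (N : ℕ) (hN : 3 ≤ N) (I : Ideal R) :
    (relativeElementarySubgroup R N I).Normal :=
  relativeElementarySubgroup_normal' hN I
end

section
/- Let R be a commutative local ring and n ≥ 2. Then SL(n,R) = E(n,R), i.e. every matrix of determinant 1 over a local ring is a product of elementary transvections. -/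
open Matrix

/-- The elementary transvection `t_{ij}(c) = 1 + c e_{ij}` as an element of `SL(n,R)`. -/
def transvectionSL (R : Type*) [CommRing R] (N : ℕ) (i j : Fin N) (hij : i ≠ j) (c : R) :
    Matrix.SpecialLinearGroup (Fin N) R :=
  ⟨Matrix.transvection i j c, Matrix.det_transvection_of_ne i j hij c⟩

/-- `E(n,R)`: the elementary subgroup of `SL(n,R)`, generated by all elementary
transvections. -/
def elementarySL (R : Type*) [CommRing R] (N : ℕ) :
    Subgroup (Matrix.SpecialLinearGroup (Fin N) R) :=
  Subgroup.closure
    { g | ∃ (i j : Fin N) (hij : i ≠ j) (c : R), g = transvectionSL R N i j hij c }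

section Aux

variable {R : Type*} [CommRing R] {N : ℕ}

lemma transvectionSL_mem (i j : Fin N) (hij : i ≠ j) (c : R) :
    transvectionSL R N i j hij c ∈ elementarySL R N :=
  Subgroup.subset_closure ⟨i, j, hij, c, rfl⟩

lemma elem_col (k : Fin N) (c : Fin N → R) :
    ∀ s : Finset (Fin N), k ∉ s →
      ∃ g ∈ elementarySL R N,
        (g : Matrix.SpecialLinearGroup (Fin N) R).val
          = 1 + ∑ i ∈ s, single i k (c i) := by
  intro s
  induction s using Finset.induction_on with
  | empty => exact fun _ => ⟨1, one_mem _, by simp⟩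
  | @insert i s his ih =>
    intro hk
    have hik : i ≠ k := fun h => hk (h ▸ Finset.mem_insert_self i s)
    have hks : k ∉ s := fun h => hk (Finset.mem_insert_of_mem h)
    obtain ⟨g, hg, hgv⟩ := ih hks
    refine ⟨transvectionSL R N i k hik (c i) * g,
      mul_mem (transvectionSL_mem i k hik (c i)) hg, ?_⟩
    have hES : single i k (c i) * ∑ i' ∈ s, single i' k (c i') = 0 := by
      rw [Finset.mul_sum]
      refine Finset.sum_eq_zero fun i' hi' => ?_
      exact Matrix.single_mul_single_of_ne (c i) i k i' (by rintro rfl; exact hks hi') _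
    have : (transvectionSL R N i k hik (c i) * g).val
        = Matrix.transvection i k (c i) * g.val := rfl
    rw [this, hgv, Matrix.transvection, Finset.sum_insert his, add_mul, one_mul, mul_add,
      mul_one, hES, add_zero]
    abel

lemma elem_row (k : Fin N) (c : Fin N → R) :
    ∀ s : Finset (Fin N), k ∉ s →
      ∃ g ∈ elementarySL R N,
        (g : Matrix.SpecialLinearGroup (Fin N) R).val
          = 1 + ∑ j ∈ s, single k j (c j) := by
  intro s
  induction s using Finset.induction_on with
  | empty => exact fun _ => ⟨1, one_mem _, by simp⟩
  | @insert j s hjs ih =>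
    intro hk
    have hkj : k ≠ j := fun h => hk (h ▸ Finset.mem_insert_self j s)
    have hks : k ∉ s := fun h => hk (Finset.mem_insert_of_mem h)
    obtain ⟨g, hg, hgv⟩ := ih hks
    refine ⟨transvectionSL R N k j hkj (c j) * g,
      mul_mem (transvectionSL_mem k j hkj (c j)) hg, ?_⟩
    have hES : single k j (c j) * ∑ j' ∈ s, single k j' (c j') = 0 := by
      rw [Finset.mul_sum]
      refine Finset.sum_eq_zero fun j' hj' => ?_
      exact Matrix.single_mul_single_of_ne (c j) k j k hkj.symm _
    have : (transvectionSL R N k j hkj (c j) * g).val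
        = Matrix.transvection k j (c j) * g.val := rfl
    rw [this, hgv, Matrix.transvection, Finset.sum_insert hjs, add_mul, one_mul, mul_add,
      mul_one, hES, add_zero]
    abel

lemma left_clear_apply (k : Fin N) (c : Fin N → R) (M : Matrix (Fin N) (Fin N) R) (i j : Fin N) :
    ((1 + ∑ i' ∈ Finset.univ.erase k, single i' k (c i')) * M) i j
      = M i j + (if i = k then 0 else c i * M k j) := by
  rw [add_mul, one_mul, Matrix.add_apply, Finset.sum_mul, Matrix.sum_apply]
  congr 1
  by_cases hik : i = k
  · subst hik
    rw [if_pos rfl]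
    refine Finset.sum_eq_zero fun i' hi' => ?_
    exact Matrix.single_mul_apply_of_ne _ _ _ _ _ (Finset.ne_of_mem_erase hi').symm M
  · rw [if_neg hik, Finset.sum_eq_single i]
    · exact Matrix.single_mul_apply_same _ _ _ _ M
    · intro b _ hb
      exact Matrix.single_mul_apply_of_ne _ _ _ _ _ (Ne.symm hb) M
    · intro h
      exact absurd (Finset.mem_erase.mpr ⟨hik, Finset.mem_univ i⟩) h

lemma right_clear_apply (k : Fin N) (c : Fin N → R) (M : Matrix (Fin N) (Fin N) R) (i j : Fin N) :
    (M * (1 + ∑ j' ∈ Finset.univ.erase k, single k j' (c j'))) i j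
      = M i j + (if j = k then 0 else M i k * c j) := by
  rw [mul_add, mul_one, Matrix.add_apply, Finset.mul_sum, Matrix.sum_apply]
  congr 1
  by_cases hjk : j = k
  · subst hjk
    rw [if_pos rfl]
    refine Finset.sum_eq_zero fun j' hj' => ?_
    exact Matrix.mul_single_apply_of_ne _ _ _ _ _ (Finset.ne_of_mem_erase hj').symm M
  · rw [if_neg hjk, Finset.sum_eq_single j]
    · exact Matrix.mul_single_apply_same _ _ _ _ M
    · intro b _ hb
      exact Matrix.mul_single_apply_of_ne _ _ _ _ _ (Ne.symm hb) M
    · intro h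
      exact absurd (Finset.mem_erase.mpr ⟨hjk, Finset.mem_univ j⟩) h

/-- Make a `1` at position `(a, k)` using a unit at `(b, k)`, preserving the identity
block below `k'`. -/
lemma pivot_one {k' : ℕ} (a b k : Fin N)
    (hab : a ≠ b) (ha : k' ≤ (a : ℕ)) (hb : k' ≤ (b : ℕ))
    (A : Matrix.SpecialLinearGroup (Fin N) R) (hu : IsUnit (A.val b k))
    (hA : ∀ i j : Fin N, ((i : ℕ) < k' ∨ (j : ℕ) < k') →
      A.val i j = (1 : Matrix (Fin N) (Fin N) R) i j) :
    ∃ g ∈ elementarySL R N, (g * A).val a k = 1 ∧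
      (∀ i j : Fin N, ((i : ℕ) < k' ∨ (j : ℕ) < k') →
        (g * A).val i j = (1 : Matrix (Fin N) (Fin N) R) i j) := by
  set c : R := (1 - A.val a k) * ↑hu.unit⁻¹ with hc
  refine ⟨transvectionSL R N a b hab c, transvectionSL_mem a b hab c, ?_, ?_⟩
  · have : (transvectionSL R N a b hab c * A).val = Matrix.transvection a b c * A.val := rfl
    rw [this, Matrix.transvection_mul_apply_same, hc, mul_assoc, IsUnit.val_inv_mul]
    ring
  · intro i j hij
    have hval : (transvectionSL R N a b hab c * A).val
        = Matrix.transvection a b c * A.val := rfl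
    by_cases hia : i = a
    · subst hia
      rcases hij with hi | hj
      · omega
      · rw [hval, Matrix.transvection_mul_apply_same]
        have h1 : A.val i j = (1 : Matrix (Fin N) (Fin N) R) i j := hA i j (Or.inr hj)
        have h2 : A.val b j = (1 : Matrix (Fin N) (Fin N) R) b j := hA b j (Or.inr hj)
        have hbj : b ≠ j := by intro h; subst h; omega
        rw [h1, h2, Matrix.one_apply_ne hbj, mul_zero, add_zero]
    · rw [hval, Matrix.transvection_mul_apply_of_ne _ _ _ _ hia]
      exact hA i j hij

variable [IsLocalRing R]

lemma key_reduction :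
    ∀ d : ℕ, ∀ A : Matrix.SpecialLinearGroup (Fin N) R,
      (∀ i j : Fin N, ((i : ℕ) < N - d ∨ (j : ℕ) < N - d) →
        A.val i j = (1 : Matrix (Fin N) (Fin N) R) i j) →
      A ∈ elementarySL R N := by
  intro d
  induction d with
  | zero =>
    intro A hA
    have hval : A.val = 1 := by
      ext i j
      exact hA i j (Or.inl (by simpa using i.2))
    have : A = 1 := Subtype.ext hval
    rw [this]; exact one_mem _
  | succ d ih =>
    intro A hA
    by_cases hd : N ≤ d
    · exact ih A fun i j h => hA i j (by omega)
    push_neg at hd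
    set k' : ℕ := N - (d + 1) with hk'
    have hkN : k' < N := by omega
    set k : Fin N := ⟨k', hkN⟩ with hkdef
    have hkval : (k : ℕ) = k' := rfl
    -- the off-identity entries of column k generate the unit ideal
    have h2 : ∑ i, A.val.adjugate k i * A.val i k = 1 := by
      have h := congrFun (congrFun (Matrix.adjugate_mul A.val) k) k
      rw [A.prop] at h
      simp only [Matrix.mul_apply, one_smul, Matrix.one_apply_eq] at h; exact h
    obtain ⟨i0, hi0⟩ : ∃ i, IsUnit (A.val i k) := by
      by_contra hcon
      push_neg at hcon
      have hmem : (1 : R) ∈ nonunits R := by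
        rw [← h2]
        refine Finset.sum_induction _ (· ∈ nonunits R)
          (fun a b ha hb => IsLocalRing.nonunits_add ha hb)
          (mem_nonunits_iff.mpr not_isUnit_zero) ?_
        intro i _
        exact mem_nonunits_iff.mpr fun hu => hcon i (isUnit_of_mul_isUnit_right hu)
      exact mem_nonunits_iff.mp hmem isUnit_one
    have hi0ge : k' ≤ (i0 : ℕ) := by
      by_contra hlt2
      push_neg at hlt2
      have h0 := hA i0 k (Or.inl hlt2)
      rw [Matrix.one_apply_ne (Fin.ne_of_val_ne (by omega))] at h0
      rw [h0] at hi0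
      exact not_isUnit_zero hi0
    rcases Nat.lt_or_ge (k' + 1) N with hlt | hge
    · -- main case: there is room below the pivot
      set l : Fin N := ⟨k' + 1, hlt⟩ with hldef
      have hlval : (l : ℕ) = k' + 1 := rfl
      -- Stage A: make the pivot equal to 1
      obtain ⟨g1, hg1, hg1kk, hg1d⟩ :
          ∃ g ∈ elementarySL R N, (g * A).val k k = 1 ∧
            (∀ i j : Fin N, ((i : ℕ) < k' ∨ (j : ℕ) < k') →
              (g * A).val i j = (1 : Matrix (Fin N) (Fin N) R) i j) := by
        by_cases hi0k : i0 = k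
        · rw [hi0k] at hi0
          have hlk : l ≠ k := Fin.ne_of_val_ne (by omega)
          obtain ⟨g0, hg0, h1, hd0⟩ := pivot_one l k k hlk (by omega) le_rfl A hi0 hA
          obtain ⟨g1', hg1', h2', hd1⟩ := pivot_one k l k hlk.symm le_rfl (by omega)
            (g0 * A) (by rw [h1]; exact isUnit_one) hd0
          exact ⟨g1' * g0, mul_mem hg1' hg0, by rwa [mul_assoc],
            by rw [mul_assoc]; exact hd1⟩
        · exact pivot_one k i0 k (Ne.symm hi0k) le_rfl hi0ge A hi0 hA
      set B1 : Matrix.SpecialLinearGroup (Fin N) R := g1 * A with hB1def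
      -- Stage B: clear column k
      obtain ⟨g2, hg2, hg2v⟩ := elem_col k (fun i => -(B1.val i k)) (Finset.univ.erase k)
        (Finset.notMem_erase k _)
      set B2 : Matrix.SpecialLinearGroup (Fin N) R := g2 * B1 with hB2def
      have hB2 : ∀ i j, B2.val i j
          = B1.val i j + (if i = k then 0 else -(B1.val i k) * B1.val k j) := by
        intro i j
        have hv : B2.val = g2.val * B1.val := rfl
        rw [hv, hg2v, left_clear_apply]
      have hB2row : ∀ j, B2.val k j = B1.val k j := fun j => by rw [hB2]; simp
      have hB2kk : B2.val k k = 1 := by rw [hB2row]; exact hg1kk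
      have hB2col : ∀ i, i ≠ k → B2.val i k = 0 := fun i hi => by
        rw [hB2, if_neg hi, hg1kk]; ring
      have hB2d : ∀ i j : Fin N, ((i : ℕ) < k' ∨ (j : ℕ) < k') →
          B2.val i j = (1 : Matrix (Fin N) (Fin N) R) i j := by
        intro i j hij
        by_cases hik : i = k
        · subst hik; rw [hB2row]; exact hg1d k j hij
        · rw [hB2, if_neg hik]
          rcases hij with hi | hj
          · rw [hg1d i k (Or.inl hi), Matrix.one_apply_ne (Fin.ne_of_val_ne (by omega)),
              neg_zero, zero_mul, add_zero]
            exact hg1d i j (Or.inl hi)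
          · rw [hg1d k j (Or.inr hj), Matrix.one_apply_ne (Fin.ne_of_val_ne (by omega)),
              mul_zero, add_zero]
            exact hg1d i j (Or.inr hj)
      -- Stage C: clear row k
      obtain ⟨g3, hg3, hg3v⟩ := elem_row k (fun j => -(B2.val k j)) (Finset.univ.erase k)
        (Finset.notMem_erase k _)
      set B3 : Matrix.SpecialLinearGroup (Fin N) R := B2 * g3 with hB3def
      have hB3 : ∀ i j, B3.val i j
          = B2.val i j + (if j = k then 0 else B2.val i k * -(B2.val k j)) := by
        intro i j
        have hv : B3.val = B2.val * g3.val := rfl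
        rw [hv, hg3v, right_clear_apply]
      have hB3d : ∀ i j : Fin N, ((i : ℕ) < k' + 1 ∨ (j : ℕ) < k' + 1) →
          B3.val i j = (1 : Matrix (Fin N) (Fin N) R) i j := by
        intro i j hij
        by_cases hjk : j = k
        · subst hjk
          rw [hB3, if_pos rfl, add_zero]
          by_cases hik : i = k
          · subst hik; rw [hB2kk, Matrix.one_apply_eq]
          · rw [hB2col i hik, Matrix.one_apply_ne hik]
        · rw [hB3, if_neg hjk]
          by_cases hik : i = k
          · subst hik
            rw [hB2kk, Matrix.one_apply_ne (Ne.symm hjk)]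
            ring
          · rw [hB2col i hik, zero_mul, add_zero]
            apply hB2d
            have hikv : (i : ℕ) ≠ k' := fun h => hik (Fin.ext h)
            have hjkv : (j : ℕ) ≠ k' := fun h => hjk (Fin.ext h)
            omega
      have hB3mem : B3 ∈ elementarySL R N := by
        refine ih B3 fun i j hij => hB3d i j ?_
        omega
      have hfin : g1⁻¹ * (g2⁻¹ * (B3 * g3⁻¹)) = A := by
        rw [show B3 = g2 * (g1 * A) * g3 from rfl]
        group
      rw [← hfin]
      exact mul_mem (inv_mem hg1) (mul_mem (inv_mem hg2) (mul_mem hB3mem (inv_mem hg3)))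
    · -- last pivot: the determinant forces the corner entry to be 1
      have hAd : ∀ i j : Fin N, i ≠ j → A.val i j = 0 := by
        intro i j hij
        have hij' : (i : ℕ) < k' ∨ (j : ℕ) < k' := by
          have hi := i.2; have hj := j.2
          have : (i : ℕ) ≠ (j : ℕ) := fun h => hij (Fin.ext h)
          omega
        rw [hA i j hij', Matrix.one_apply_ne hij]
      have hdiag : A.val = Matrix.diagonal fun i => A.val i i := by
        ext i j
        by_cases h : i = j
        · subst h; rw [Matrix.diagonal_apply_eq]
        · rw [Matrix.diagonal_apply_ne _ h]; exact hAd i j h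
      have hd1 : ∏ i, A.val i i = 1 := by
        have := A.prop
        rwa [hdiag, Matrix.det_diagonal] at this
      have hdiag1 : ∀ i : Fin N, i ≠ k → A.val i i = 1 := by
        intro i hi
        have hiv : (i : ℕ) < k' := by
          have := i.2
          have : (i : ℕ) ≠ k' := fun h => hi (Fin.ext h)
          omega
        rw [hA i i (Or.inl hiv), Matrix.one_apply_eq]
      have hkk : A.val k k = 1 := by
        rwa [Finset.prod_eq_single k (fun i _ hi => hdiag1 i hi)
          (fun h => absurd (Finset.mem_univ k) h)] at hd1
      have hval : A.val = 1 := by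
        ext i j
        by_cases h : i = j
        · subst h
          by_cases hik : i = k
          · subst hik; rw [hkk, Matrix.one_apply_eq]
          · rw [hdiag1 i hik, Matrix.one_apply_eq]
        · rw [hAd i j h, Matrix.one_apply_ne h]
      have : A = 1 := Subtype.ext hval
      rw [this]; exact one_mem _

end Aux

/-- Over a commutative local ring, `SL(n,R) = E(n,R)`: every matrix of determinant one
is a product of elementary transvections. -/
theorem specialLinearGroup_eq_elementary_of_localRing
    (R : Type*) [CommRing R] [IsLocalRing R] (N : ℕ) (hN : 2 ≤ N) :
    elementarySL R N = ⊤ := by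
  rw [eq_top_iff]
  intro A _
  exact key_reduction N A fun i j hij => by omega
end

section
/- Let R be a commutative ring, s ∈ R, and let π_n : R → R/s^n R be the reduction maps. If an element a ∈ R satisfies: a maps to 0 in R_s (i.e. s^m a = 0 for some m) and a ∈ s^n R for all n, and R is Noetherian, then by Krull's intersection theorem adapted to this setting, for n large enough with Ann(s^n) = Ann(s^{n+1}) = …, one has a = 0 whenever a ∈ s^n R and F_s(a) = 0. -/
/-- Once `n` exceeds the stabilisation index of the chain of annihilators `Ann(s^i)`
in a Noetherian ring, every element of `s^n R` killed by `F_s : R → R_s` is zero. -/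
theorem eq_zero_of_mem_pow_of_localization_eq_zero
    (R : Type*) [CommRing R] [IsNoetherianRing R] (s : R) :
    ∃ k : ℕ,
      (∀ i : ℕ, {a : R | s ^ k * a = 0} = {a : R | s ^ (k + i) * a = 0}) ∧
      ∀ n : ℕ, k ≤ n → ∀ a : R, a ∈ Ideal.span {s ^ n} →
        algebraMap R (Localization.Away s) a = 0 → a = 0 := by
  -- the chain of annihilators
  set f : ℕ →o Submodule R R :=
    ⟨fun i => LinearMap.ker (LinearMap.lsmul R R (s ^ i)), by
      intro i j hij x hx
      simp only [LinearMap.mem_ker, LinearMap.lsmul_apply, smul_eq_mul] at hx ⊢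
      obtain ⟨d, rfl⟩ := Nat.exists_eq_add_of_le hij
      rw [pow_add, mul_comm (s ^ i), mul_assoc, hx, mul_zero]⟩ with hf
  obtain ⟨k, hk⟩ := monotone_stabilizes_iff_noetherian.mpr (inferInstance : IsNoetherian R R) f
  have hkey : ∀ i, f k = f (k + i) := fun i => hk (k + i) (Nat.le_add_right k i)
  refine ⟨k, ?_, ?_⟩
  · intro i
    ext x
    have := hkey i
    constructor
    · intro hx
      have : x ∈ f (k + i) := (hkey i) ▸ (show x ∈ f k from hx)
      exact this
    · intro hx
      have : x ∈ f k := (hkey i) ▸ (show x ∈ f (k + i) from hx)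
      exact this
  · intro n hn a ha hloc
    obtain ⟨b, rfl⟩ := Ideal.mem_span_singleton'.mp ha
    rw [mul_comm] at *
    -- s^n * b = 0 target; from localization, ∃ m, s^m * (s^n * b) = 0
    obtain ⟨⟨c, m, rfl⟩, hc⟩ :=
      (IsLocalization.map_eq_zero_iff (Submonoid.powers s) (Localization.Away s) _).mp hloc
    have hb : b ∈ f (m + n) := by
      show s ^ (m + n) * b = 0
      simp only [Submonoid.smul_def, smul_eq_mul] at hc
      rw [pow_add]
      linear_combination hc
    have hb' : b ∈ f n := by
      have h1 : f n = f k := (hk n hn).symm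
      have h2 : f (m + n) = f k := (hk (m + n) (hn.trans (Nat.le_add_left n m))).symm
      rw [h1, ← h2]; exact hb
    exact hb'
end
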